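/- arXiv:2510.23285 — 6 statements merged into one kernel-verified Lean document; each statement's English description precedes it below -/
import Mathlib

section
/- Fix d ∈ ℕ, t ≥ 0, Δt > 0, constants L₀, L₁, L₂, ε ≥ 0 and B > 0, and let F, G : ℝ^d × ℝ → ℝ^d satisfy the drift assumptions. Define the exact backward-flow map Φ : ℝ^d → ℝ^d by Φ(z) = x(t), where x : [t, t+Δt] → ℝ^d solves x'(s) = −G(x(s), s) with terminal condition x(t+Δt) = z, and define the one-step frozen-drift map Ψ(z) = z + Δt·F(z, t+Δt). Let p and q be Borel probability measures on ℝ^d (the true and the generated distribution at noise level t+Δt), and assume that supp p, supp q, every exact trajectory {x(s) : s ∈ [t, t+Δt]} started from supp p, and the images Φ(supp p) and Ψ(supp q) are all contained in the closed ball of radius B/2 centered at the origin. Then W₁(Ψ_* q, Φ_* p) ≤ B·TV(q, p) + e^{L₂Δt}·(Δt·(L₂L₁ + L₀) + ε)·Δt. -/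
open MeasureTheory

noncomputable section

/-- Total variation distance between two measures:
`TV(μ, ν) = sup over Borel sets A of |μ(A) − ν(A)|`. -/
def tvDist {E : Type*} [MeasurableSpace E] (μ ν : Measure E) : ℝ :=
  ⨆ A : {A : Set E // MeasurableSet A}, |(μ A.1).toReal - (ν A.1).toReal|

/-- `π` is a coupling of `μ` and `ν`. -/
def IsCoupling {E : Type*} [MeasurableSpace E] (π : Measure (E × E)) (μ ν : Measure E) : Prop :=
  π.map Prod.fst = μ ∧ π.map Prod.snd = ν

/-- Wasserstein-1 distance: infimum over couplings of `∫ ‖x − y‖ dπ`. -/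
def W1 {E : Type*} [MeasurableSpace E] [NormedAddCommGroup E] (μ ν : Measure E) : ℝ :=
  sInf {r : ℝ | ∃ π : Measure (E × E), IsProbabilityMeasure π ∧ IsCoupling π μ ν ∧
    r = ∫ p, ‖p.1 - p.2‖ ∂π}

/-- The isotropic Gaussian measure `N(m, σ²I_d)` on `ℝ^d`, given by its Lebesgue density. -/
def gaussianE (d : ℕ) (m : EuclideanSpace ℝ (Fin d)) (σ2 : ℝ) :
    Measure (EuclideanSpace ℝ (Fin d)) :=
  volume.withDensity fun x =>
    ENNReal.ofReal ((2 * Real.pi * σ2) ^ (-(d : ℝ) / 2) * Real.exp (-‖x - m‖ ^ 2 / (2 * σ2)))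

/-- Standard Gaussian tail function `Q(r) = P(a ≥ r)` for `a ~ N(0,1)`. -/
def gaussQ (r : ℝ) : ℝ := (ProbabilityTheory.gaussianReal 0 1 (Set.Ici r)).toReal

/-- Standard normal cumulative distribution function `Φ`. -/
def stdCDF (r : ℝ) : ℝ := (ProbabilityTheory.gaussianReal 0 1 (Set.Iic r)).toReal

/-- The (topological) support of a measure: points all of whose neighborhoods
have positive measure. -/
def msupport {E : Type*} [TopologicalSpace E] [MeasurableSpace E] (μ : Measure E) : Set E :=
  {x | ∀ U ∈ nhds x, μ U ≠ 0}

lemma msupport_compl_null' {E : Type*} [TopologicalSpace E] [SecondCountableTopology E]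
    [MeasurableSpace E] (μ : Measure E) : μ (msupport μ)ᶜ = 0 := by
  obtain ⟨b, hbc, -, hb⟩ := TopologicalSpace.exists_countable_basis E
  have hsub : (msupport μ)ᶜ ⊆ ⋃₀ {U ∈ b | μ U = 0} := by
    intro x hx
    simp only [msupport, Set.mem_compl_iff, Set.mem_setOf_eq, not_forall] at hx
    obtain ⟨V, hV, hμV⟩ := hx
    push_neg at hμV
    obtain ⟨U, hUb, hxU, hUV⟩ := hb.mem_nhds_iff.mp hV
    exact ⟨U, ⟨hUb, measure_mono_null hUV hμV⟩, hxU⟩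
  refine measure_mono_null hsub (measure_sUnion_null_iff ?_ |>.mpr fun U hU => hU.2)
  exact hbc.mono (Set.sep_subset _ _)

lemma coupling_bound' {Eu : Type*} [NormedAddCommGroup Eu] [MeasurableSpace Eu]
    [SecondCountableTopology Eu] [BorelSpace Eu]
    (Φ Ψ : Eu → Eu) (hΦm : Measurable Φ) (hΨm : Measurable Ψ)
    (p q : Measure Eu) [IsProbabilityMeasure p] [IsProbabilityMeasure q]
    (Ebd B : ℝ) (hB : 0 < B)
    (hpt : ∀ z, ‖Ψ z - Φ z‖ ≤ Ebd)
    (hΨB : ∀ x ∈ msupport q, ‖Ψ x‖ ≤ B / 2)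
    (hΦB : ∀ x ∈ msupport p, ‖Φ x‖ ≤ B / 2)
    {S : Set Eu} (hSm : MeasurableSet S)
    (hS1 : ∀ A, MeasurableSet A → A ⊆ S → p A ≤ q A)
    (hS2 : ∀ A, MeasurableSet A → A ⊆ Sᶜ → q A ≤ p A) :
    W1 (q.map Ψ) (p.map Φ) ≤ B * ((q S).toReal - (p S).toReal) + Ebd := by
  classical
  have hE0 : 0 ≤ Ebd := le_trans (norm_nonneg _) (hpt 0)
  -- decomposition
  have hle1 : p.restrict S ≤ q.restrict S := by
    refine Measure.le_iff.mpr fun A hA => ?_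
    rw [Measure.restrict_apply hA, Measure.restrict_apply hA]
    exact hS1 _ (hA.inter hSm) Set.inter_subset_right
  set q' : Measure Eu := q.restrict S - p.restrict S with hq'def
  set ν : Measure Eu := p.restrict S + q.restrict Sᶜ with hνdef
  haveI : IsFiniteMeasure (p.restrict S) := inferInstance
  have hq : q = q' + ν := by
    rw [hq'def, hνdef, ← add_assoc, Measure.sub_add_cancel_of_le hle1,
      Measure.restrict_add_restrict_compl hSm]
  set m : ENNReal := q' Set.univ with hmdef
  have hm_eq : m = q S - p S := by
    rw [hmdef, hq'def, Measure.sub_apply MeasurableSet.univ hle1,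
      Measure.restrict_apply_univ, Measure.restrict_apply_univ]
  have hpSle : p S ≤ q S := hS1 S hSm subset_rfl
  have hm_le : m ≤ 1 := by
    rw [hm_eq]
    exact le_trans (tsub_le_self) prob_le_one
  have hm_top : m ≠ ⊤ := (lt_of_le_of_lt hm_le ENNReal.one_lt_top).ne
  -- p' with same mass
  have hνle : ν Set.univ ≤ 1 := by
    have : ν Set.univ ≤ q Set.univ := by
      rw [hq]; exact le_add_self
    simpa using this
  haveI hνfin : IsFiniteMeasure ν :=
    ⟨lt_of_le_of_lt hνle ENNReal.one_lt_top⟩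
  have hle2 : q.restrict Sᶜ ≤ p.restrict Sᶜ := by
    refine Measure.le_iff.mpr fun A hA => ?_
    rw [Measure.restrict_apply hA, Measure.restrict_apply hA]
    exact hS2 _ (hA.inter hSm.compl) Set.inter_subset_right
  set p' : Measure Eu := p.restrict Sᶜ - q.restrict Sᶜ with hp'def
  have hp : p = p' + ν := by
    rw [hp'def, hνdef]
    rw [add_left_comm, Measure.sub_add_cancel_of_le hle2,
      Measure.restrict_add_restrict_compl hSm]
  have hq'univ : q' Set.univ = m := rfl
  have hmass : m + ν Set.univ = 1 := by
    have h1 : q Set.univ = q' Set.univ + ν Set.univ := by rw [hq]; rfl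
    rw [measure_univ] at h1
    exact h1.symm
  have hp'univ : p' Set.univ = m := by
    have h1 : p Set.univ = p' Set.univ + ν Set.univ := by rw [hp]; rfl
    rw [measure_univ] at h1
    have := hmass
    -- cancel ν univ
    have hν_top : ν Set.univ ≠ ⊤ := (lt_of_le_of_lt hνle ENNReal.one_lt_top).ne
    have := ENNReal.sub_eq_of_eq_add hν_top h1
    rw [← this, ENNReal.sub_eq_of_eq_add hν_top hmass.symm]
  haveI hq'fin : IsFiniteMeasure q' :=
    ⟨lt_of_le_of_lt (hq'univ ▸ hm_le) ENNReal.one_lt_top⟩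
  haveI hp'fin : IsFiniteMeasure p' :=
    ⟨lt_of_le_of_lt (hp'univ ▸ hm_le) ENNReal.one_lt_top⟩
  have hq'0 : m = 0 → q' = 0 := fun h => Measure.measure_univ_eq_zero.mp (hq'univ.trans h)
  have hp'0 : m = 0 → p' = 0 := fun h => Measure.measure_univ_eq_zero.mp (hp'univ.trans h)
  -- the coupling
  set diag : Eu → Eu × Eu := fun x => (x, x) with hdiagdef
  have hdiag : Measurable diag := measurable_id.prodMk measurable_id
  set μ₁ : Measure (Eu × Eu) := ν.map diag with hμ₁def
  set μ₂ : Measure (Eu × Eu) := m⁻¹ • (q'.prod p') with hμ₂def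
  set π₀ : Measure (Eu × Eu) := μ₁ + μ₂ with hπ₀def
  have hpm : Measurable (Prod.map Ψ Φ) :=
    (hΨm.comp measurable_fst).prodMk (hΦm.comp measurable_snd)
  set π : Measure (Eu × Eu) := π₀.map (Prod.map Ψ Φ) with hπdef
  -- marginals of π₀
  have hsmul_cancel : ∀ (μ : Measure Eu), μ Set.univ = m → (m⁻¹ * m) • μ = μ := by
    intro μ hμ
    by_cases hm : m = 0
    · have : μ = 0 := Measure.measure_univ_eq_zero.mp (hμ.trans hm)
      simp [this]
    · rw [ENNReal.inv_mul_cancel hm hm_top, one_smul]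
  have hfst : π₀.map Prod.fst = q := by
    rw [hπ₀def, Measure.map_add _ _ measurable_fst, hμ₁def, hμ₂def,
      Measure.map_map measurable_fst hdiag]
    have h1 : Prod.fst ∘ diag = id := rfl
    rw [h1, Measure.map_id, Measure.map_smul, Measure.map_fst_prod, hp'univ,
      smul_smul, hsmul_cancel q' hq'univ, add_comm]
    exact hq.symm
  have hsnd : π₀.map Prod.snd = p := by
    rw [hπ₀def, Measure.map_add _ _ measurable_snd, hμ₁def, hμ₂def,
      Measure.map_map measurable_snd hdiag]
    have h1 : Prod.snd ∘ diag = id := rfl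
    rw [h1, Measure.map_id, Measure.map_smul, Measure.map_snd_prod, hq'univ,
      smul_smul, hsmul_cancel p' hp'univ, add_comm]
    exact hp.symm
  -- total masses
  have hμ₁univ : μ₁ Set.univ = ν Set.univ := by
    rw [hμ₁def, Measure.map_apply hdiag MeasurableSet.univ, Set.preimage_univ]
  have hμ₂univ : μ₂ Set.univ = m := by
    rw [hμ₂def, Measure.smul_apply, smul_eq_mul, ← Set.univ_prod_univ,
      Measure.prod_prod, hq'univ, hp'univ, ← mul_assoc]
    by_cases hm : m = 0
    · simp [hm]
    · rw [ENNReal.inv_mul_cancel hm hm_top, one_mul]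
  haveI hπ₀prob : IsProbabilityMeasure π₀ := by
    constructor
    rw [hπ₀def, Measure.add_apply, hμ₁univ, hμ₂univ, add_comm]
    exact hmass
  haveI hπprob : IsProbabilityMeasure π := Measure.isProbabilityMeasure_map hpm.aemeasurable
  have hcoup : IsCoupling π (q.map Ψ) (p.map Φ) := by
    constructor
    · rw [hπdef, Measure.map_map measurable_fst hpm]
      have : Prod.fst ∘ Prod.map Ψ Φ = Ψ ∘ Prod.fst := rfl
      rw [this, ← Measure.map_map hΨm measurable_fst, hfst]
    · rw [hπdef, Measure.map_map measurable_snd hpm]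
      have : Prod.snd ∘ Prod.map Ψ Φ = Φ ∘ Prod.snd := rfl
      rw [this, ← Measure.map_map hΦm measurable_snd, hsnd]
  -- the cost
  set gfun : Eu × Eu → ℝ := fun pr => ‖Ψ pr.1 - Φ pr.2‖ with hgdef
  have hgm : Measurable gfun :=
    ((hΨm.comp measurable_fst).sub (hΦm.comp measurable_snd)).norm
  have hcost : ∫ pr, ‖pr.1 - pr.2‖ ∂π = ∫ pr, gfun pr ∂π₀ := by
    rw [hπdef, integral_map (f := fun pr : Eu × Eu => ‖pr.1 - pr.2‖) hpm.aemeasurable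
      (((measurable_fst.sub measurable_snd).norm).aestronglyMeasurable)]
    rfl
  -- bound on μ₁ part
  have hae1 : ∀ᵐ pr ∂μ₁, ‖gfun pr‖ ≤ Ebd := by
    rw [hμ₁def, ae_map_iff hdiag.aemeasurable
      (measurableSet_le hgm.norm measurable_const)]
    refine Filter.Eventually.of_forall fun x => ?_
    simpa [hgdef, hdiagdef, Real.norm_eq_abs, abs_of_nonneg (norm_nonneg _)] using hpt x
  haveI hμ₁fin : IsFiniteMeasure μ₁ := ⟨by rw [hμ₁univ]; exact lt_of_le_of_lt hνle ENNReal.one_lt_top⟩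
  haveI hμ₂fin : IsFiniteMeasure μ₂ := ⟨by rw [hμ₂univ]; exact lt_of_le_of_lt hm_le ENNReal.one_lt_top⟩
  have hint1 : Integrable gfun μ₁ :=
    (integrable_const Ebd).mono' hgm.aestronglyMeasurable hae1
  have hI1 : ∫ pr, gfun pr ∂μ₁ ≤ Ebd := by
    have h := norm_integral_le_of_norm_le_const hae1
    have h2 : (μ₁ Set.univ).toReal ≤ 1 := by
      rw [hμ₁univ]
      simpa using ENNReal.toReal_mono ENNReal.one_ne_top hνle
    calc ∫ pr, gfun pr ∂μ₁ ≤ ‖∫ pr, gfun pr ∂μ₁‖ := le_abs_self _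
      _ ≤ Ebd * (μ₁ Set.univ).toReal := h
      _ ≤ Ebd * 1 := mul_le_mul_of_nonneg_left h2 hE0
      _ = Ebd := mul_one _
  -- bound on μ₂ part
  have hq'null : q' (msupport q)ᶜ = 0 := by
    have h1 : q' (msupport q)ᶜ ≤ q (msupport q)ᶜ := by
      refine le_trans (Measure.le_iff'.mp Measure.sub_le _) ?_
      exact Measure.le_iff'.mp Measure.restrict_le_self _
    rw [msupport_compl_null' q] at h1
    exact le_antisymm h1 zero_le
  have hp'null : p' (msupport p)ᶜ = 0 := by
    have h1 : p' (msupport p)ᶜ ≤ p (msupport p)ᶜ := by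
      refine le_trans (Measure.le_iff'.mp Measure.sub_le _) ?_
      exact Measure.le_iff'.mp Measure.restrict_le_self _
    rw [msupport_compl_null' p] at h1
    exact le_antisymm h1 zero_le
  have hae2 : ∀ᵐ pr ∂μ₂, ‖gfun pr‖ ≤ B := by
    rw [ae_iff]
    refine measure_mono_null (fun pr hpr => ?_)
      (?_ : μ₂ (((msupport q)ᶜ ×ˢ Set.univ) ∪ (Set.univ ×ˢ (msupport p)ᶜ)) = 0)
    · simp only [Set.mem_setOf_eq] at hpr
      rw [Set.mem_union]
      by_contra hcon
      push_neg at hcon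
      obtain ⟨h1, h2⟩ := hcon
      rw [Set.mem_prod, not_and_or] at h1 h2
      have hx : pr.1 ∈ msupport q := by
        rcases h1 with h | h
        · exact not_not.mp (by simpa using h)
        · exact absurd (Set.mem_univ pr.2) h
      have hy : pr.2 ∈ msupport p := by
        rcases h2 with h | h
        · exact absurd (Set.mem_univ pr.1) h
        · exact not_not.mp (by simpa using h)
      refine hpr ?_
      have : gfun pr ≤ B := by
        calc gfun pr ≤ ‖Ψ pr.1‖ + ‖Φ pr.2‖ := norm_sub_le _ _
          _ ≤ B / 2 + B / 2 := add_le_add (hΨB _ hx) (hΦB _ hy)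
          _ = B := by ring
      simpa [Real.norm_eq_abs, abs_of_nonneg (show (0:ℝ) ≤ gfun pr from norm_nonneg _)] using this
    · refine measure_union_null ?_ ?_
      · rw [hμ₂def, Measure.smul_apply, Measure.prod_prod, hq'null, zero_mul,
          smul_eq_mul, mul_zero]
      · rw [hμ₂def, Measure.smul_apply, Measure.prod_prod, hp'null, mul_zero,
          smul_eq_mul, mul_zero]
  have hint2 : Integrable gfun μ₂ :=
    (integrable_const B).mono' hgm.aestronglyMeasurable hae2
  have hI2 : ∫ pr, gfun pr ∂μ₂ ≤ B * m.toReal := by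
    have h := norm_integral_le_of_norm_le_const hae2
    rw [measureReal_def, hμ₂univ] at h
    calc ∫ pr, gfun pr ∂μ₂ ≤ ‖∫ pr, gfun pr ∂μ₂‖ := le_abs_self _
      _ ≤ B * m.toReal := h
  -- assemble
  have hsplit : ∫ pr, gfun pr ∂π₀ = ∫ pr, gfun pr ∂μ₁ + ∫ pr, gfun pr ∂μ₂ := by
    rw [hπ₀def]
    exact integral_add_measure hint1 hint2
  have hmem : (∫ pr, ‖pr.1 - pr.2‖ ∂π) ∈ {r : ℝ | ∃ π' : Measure (Eu × Eu),
      IsProbabilityMeasure π' ∧ IsCoupling π' (q.map Ψ) (p.map Φ) ∧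
      r = ∫ pr, ‖pr.1 - pr.2‖ ∂π'} := ⟨π, hπprob, hcoup, rfl⟩
  have hW1 : W1 (q.map Ψ) (p.map Φ) ≤ ∫ pr, ‖pr.1 - pr.2‖ ∂π := by
    refine csInf_le ⟨0, fun r hr => ?_⟩ hmem
    obtain ⟨π', hπ', hc', rfl⟩ := hr
    exact integral_nonneg fun pr => norm_nonneg _
  have hmtr : m.toReal = (q S).toReal - (p S).toReal := by
    rw [hm_eq, ENNReal.toReal_sub_of_le hpSle (measure_ne_top q S)]
  calc W1 (q.map Ψ) (p.map Φ) ≤ ∫ pr, ‖pr.1 - pr.2‖ ∂π := hW1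
    _ = ∫ pr, gfun pr ∂π₀ := hcost
    _ = ∫ pr, gfun pr ∂μ₁ + ∫ pr, gfun pr ∂μ₂ := hsplit
    _ ≤ Ebd + B * m.toReal := add_le_add hI1 hI2
    _ = B * ((q S).toReal - (p S).toReal) + Ebd := by rw [hmtr]; ring


lemma pointwise_bound (d : ℕ) (t Δt L0 L1 L2 ε : ℝ) (hΔt : 0 < Δt)
    (hL0 : 0 ≤ L0) (hL2 : 0 ≤ L2)
    (F G : EuclideanSpace ℝ (Fin d) → ℝ → EuclideanSpace ℝ (Fin d))
    (hLip : ∀ x y : EuclideanSpace ℝ (Fin d), ∀ s ∈ Set.Icc t (t + Δt),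
      ‖F x s - F y s‖ ≤ L2 * ‖x - y‖)
    (hTime : ∀ x : EuclideanSpace ℝ (Fin d), ∀ s ∈ Set.Icc t (t + Δt),
      ∀ s' ∈ Set.Icc t (t + Δt), ‖F x s - F x s'‖ ≤ L0 * |s - s'|)
    (hBdd : ∀ x : EuclideanSpace ℝ (Fin d), ∀ s ∈ Set.Icc t (t + Δt), ‖F x s‖ ≤ L1)
    (hApprox : ∀ x : EuclideanSpace ℝ (Fin d), ∀ s ∈ Set.Icc t (t + Δt),
      ‖F x s - G x s‖ ≤ ε)
    (X : EuclideanSpace ℝ (Fin d) → ℝ → EuclideanSpace ℝ (Fin d))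
    (hX : ∀ z : EuclideanSpace ℝ (Fin d), ∀ s ∈ Set.Icc t (t + Δt),
      HasDerivWithinAt (X z) (-(G (X z s) s)) (Set.Icc t (t + Δt)) s)
    (hXend : ∀ z : EuclideanSpace ℝ (Fin d), X z (t + Δt) = z)
    (Φ Ψ : EuclideanSpace ℝ (Fin d) → EuclideanSpace ℝ (Fin d))
    (hΦ : ∀ z, Φ z = X z t)
    (hΨ : ∀ z, Ψ z = z + Δt • F z (t + Δt))
    (z : EuclideanSpace ℝ (Fin d)) :
    ‖Ψ z - Φ z‖ ≤ (L2 * (L1 + ε) * Δt + L0 * Δt + ε) * Δt := by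
  have memL : t ∈ Set.Icc t (t + Δt) := by constructor <;> nlinarith
  have memR : t + Δt ∈ Set.Icc t (t + Δt) := by constructor <;> nlinarith
  have hconv : Convex ℝ (Set.Icc t (t + Δt)) := convex_Icc _ _
  have hG : ∀ x, ∀ s ∈ Set.Icc t (t + Δt), ‖G x s‖ ≤ L1 + ε := by
    intro x s hs
    calc ‖G x s‖ = ‖F x s - (F x s - G x s)‖ := by rw [sub_sub_cancel]
      _ ≤ ‖F x s‖ + ‖F x s - G x s‖ := norm_sub_le _ _
      _ ≤ L1 + ε := add_le_add (hBdd x s hs) (hApprox x s hs)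
  have stepA : ∀ s ∈ Set.Icc t (t + Δt), ‖X z s - z‖ ≤ (L1 + ε) * Δt := by
    intro s hs
    have := hconv.norm_image_sub_le_of_norm_hasDerivWithin_le
      (f := X z) (f' := fun s => -(G (X z s) s)) (hX z)
      (fun u hu => by rw [norm_neg]; exact hG _ u hu) memR hs
    rw [hXend] at this
    refine this.trans ?_
    have h1 : ‖s - (t + Δt)‖ ≤ Δt := by
      rw [Real.norm_eq_abs, abs_le]
      constructor <;> [nlinarith [hs.1]; nlinarith [hs.2]]
    have : 0 ≤ L1 + ε := le_trans (norm_nonneg _) (hG z _ memL)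
    nlinarith
  set v := F z (t + Δt) with hv
  set C := L2 * (L1 + ε) * Δt + L0 * Δt + ε with hC
  have key := hconv.norm_image_sub_le_of_norm_hasDerivWithin_le
    (f := fun s => X z s + (s - (t + Δt)) • v)
    (f' := fun s => -(G (X z s) s) + v)
    (fun s hs => (hX z s hs).add (by
      simpa using ((hasDerivWithinAt_id s (Set.Icc t (t+Δt))).sub_const (t+Δt)).smul_const v))
    (fun s hs => by
      have e1 : ‖-(G (X z s) s) + v‖ = ‖v - G (X z s) s‖ := by rw [neg_add_eq_sub]
      rw [e1]
      calc ‖v - G (X z s) s‖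
          ≤ ‖v - F (X z s) (t + Δt)‖ + ‖F (X z s) (t + Δt) - F (X z s) s‖
            + ‖F (X z s) s - G (X z s) s‖ := by
            have := norm_add₃_le (a := v - F (X z s) (t + Δt))
              (b := F (X z s) (t + Δt) - F (X z s) s) (c := F (X z s) s - G (X z s) s)
            simpa using this
        _ ≤ L2 * ‖z - X z s‖ + L0 * |t + Δt - s| + ε :=
            add_le_add (add_le_add (hLip z (X z s) (t + Δt) memR)
              (hTime (X z s) (t + Δt) memR s hs)) (hApprox (X z s) s hs)
        _ ≤ C := by
            rw [norm_sub_rev]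
            have h1 := stepA s hs
            have h2 : |t + Δt - s| ≤ Δt := by
              rw [abs_le]; constructor <;> [nlinarith [hs.2]; nlinarith [hs.1]]
            have h3 := mul_le_mul_of_nonneg_left h1 hL2
            have h4 := mul_le_mul_of_nonneg_left h2 hL0
            rw [hC]; nlinarith) memR memL
  have e2 : (fun s => X z s + (s - (t + Δt)) • v) t - (fun s => X z s + (s - (t + Δt)) • v) (t + Δt)
      = -(Ψ z - Φ z) := by
    simp only [hXend, hΦ z, hΨ z, hv]
    module
  rw [e2, norm_neg] at key
  have e3 : ‖t - (t + Δt)‖ = Δt := by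
    rw [Real.norm_eq_abs]; rw [abs_of_nonpos] <;> linarith
  rw [e3] at key
  exact key

/-- **ODE error bound.** With `Φ` the exact backward-flow map given by the
trajectories `X z` of `x'(s) = −G(x(s), s)` with terminal condition `z`, and
`Ψ(z) = z + Δt·F(z, t+Δt)` the one-step frozen-drift map, for probability measures
`p` (true) and `q` (generated) at noise level `t+Δt` with all supports, trajectories,
and images inside the ball of radius `B/2`, we have
`W₁(Ψ_*q, Φ_*p) ≤ B·TV(q, p) + e^{L₂Δt}·(Δt(L₂L₁ + L₀) + ε)·Δt`. -/
theorem ode_error_bound (d : ℕ) (t Δt L0 L1 L2 ε B : ℝ)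
    (ht : 0 ≤ t) (hΔt : 0 < Δt)
    (hL0 : 0 ≤ L0) (hL1 : 0 ≤ L1) (hL2 : 0 ≤ L2) (hε : 0 ≤ ε) (hB : 0 < B)
    (F G : EuclideanSpace ℝ (Fin d) → ℝ → EuclideanSpace ℝ (Fin d))
    (hLip : ∀ x y : EuclideanSpace ℝ (Fin d), ∀ s ∈ Set.Icc t (t + Δt),
      ‖F x s - F y s‖ ≤ L2 * ‖x - y‖)
    (hTime : ∀ x : EuclideanSpace ℝ (Fin d), ∀ s ∈ Set.Icc t (t + Δt),
      ∀ s' ∈ Set.Icc t (t + Δt), ‖F x s - F x s'‖ ≤ L0 * |s - s'|)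
    (hBdd : ∀ x : EuclideanSpace ℝ (Fin d), ∀ s ∈ Set.Icc t (t + Δt), ‖F x s‖ ≤ L1)
    (hApprox : ∀ x : EuclideanSpace ℝ (Fin d), ∀ s ∈ Set.Icc t (t + Δt),
      ‖F x s - G x s‖ ≤ ε)
    -- the exact backward trajectories and the induced flow map Φ
    (X : EuclideanSpace ℝ (Fin d) → ℝ → EuclideanSpace ℝ (Fin d))
    (hX : ∀ z : EuclideanSpace ℝ (Fin d), ∀ s ∈ Set.Icc t (t + Δt),
      HasDerivWithinAt (X z) (-(G (X z s) s)) (Set.Icc t (t + Δt)) s)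
    (hXend : ∀ z : EuclideanSpace ℝ (Fin d), X z (t + Δt) = z)
    (Φ Ψ : EuclideanSpace ℝ (Fin d) → EuclideanSpace ℝ (Fin d))
    (hΦ : ∀ z, Φ z = X z t)
    (hΨ : ∀ z, Ψ z = z + Δt • F z (t + Δt))
    (hΦm : Measurable Φ) (hΨm : Measurable Ψ)
    -- the true distribution p and the generated distribution q at noise level t+Δt
    (p q : Measure (EuclideanSpace ℝ (Fin d)))
    [IsProbabilityMeasure p] [IsProbabilityMeasure q]
    -- boundedness: supports, exact trajectories from supp p, and images in the ball
    (hpsupp : msupport p ⊆ Metric.closedBall 0 (B / 2))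
    (hqsupp : msupport q ⊆ Metric.closedBall 0 (B / 2))
    (htraj : ∀ z ∈ msupport p, ∀ s ∈ Set.Icc t (t + Δt), ‖X z s‖ ≤ B / 2)
    (hΦim : Φ '' msupport p ⊆ Metric.closedBall 0 (B / 2))
    (hΨim : Ψ '' msupport q ⊆ Metric.closedBall 0 (B / 2)) :
    W1 (q.map Ψ) (p.map Φ)
      ≤ B * tvDist q p + Real.exp (L2 * Δt) * (Δt * (L2 * L1 + L0) + ε) * Δt := by
  
  classical
  set Ebd : ℝ := Real.exp (L2 * Δt) * (Δt * (L2 * L1 + L0) + ε) * Δt with hEbddef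
  have hA0 : 0 ≤ Δt * (L2 * L1 + L0) + ε := by positivity
  have hexp : (1 + L2 * Δt) ≤ Real.exp (L2 * Δt) := by
    have := Real.add_one_le_exp (L2 * Δt); linarith
  have hcmp : (L2 * (L1 + ε) * Δt + L0 * Δt + ε) * Δt ≤ Ebd := by
    have h := mul_le_mul_of_nonneg_right
      (mul_le_mul_of_nonneg_right hexp hA0) hΔt.le
    have h1 : 0 ≤ L2 * L2 * L1 * Δt * Δt * Δt := by positivity
    have h2 : 0 ≤ L2 * L0 * Δt * Δt * Δt := by positivity
    rw [hEbddef]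
    nlinarith [h, h1, h2]
  have hpt : ∀ z, ‖Ψ z - Φ z‖ ≤ Ebd := fun z =>
    (pointwise_bound d t Δt L0 L1 L2 ε hΔt hL0 hL2 F G hLip hTime hBdd hApprox
      X hX hXend Φ Ψ hΦ hΨ z).trans hcmp
  have hΨB : ∀ x ∈ msupport q, ‖Ψ x‖ ≤ B / 2 := fun x hx => by
    have := hΨim ⟨x, hx, rfl⟩
    rwa [mem_closedBall_zero_iff] at this
  have hΦB : ∀ x ∈ msupport p, ‖Φ x‖ ≤ B / 2 := fun x hx => by
    have := hΦim ⟨x, hx, rfl⟩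
    rwa [mem_closedBall_zero_iff] at this
  obtain ⟨S, hSm, hS1, hS2⟩ := hahn_decomposition (μ := q) (ν := p)
  have hmain := coupling_bound' Φ Ψ hΦm hΨm p q Ebd B hB hpt hΨB hΦB hSm hS1 hS2
  have htv : (q S).toReal - (p S).toReal ≤ tvDist q p := by
    have hbdd : BddAbove (Set.range fun (A : {A : Set (EuclideanSpace ℝ (Fin d)) //
        MeasurableSet A}) => |(q A.1).toReal - (p A.1).toReal|) := by
      refine ⟨1, ?_⟩
      rintro r ⟨A, rfl⟩
      have h1 : (q A.1).toReal ≤ 1 := by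
        simpa using ENNReal.toReal_mono ENNReal.one_ne_top prob_le_one
      have h2 : (p A.1).toReal ≤ 1 := by
        simpa using ENNReal.toReal_mono ENNReal.one_ne_top prob_le_one
      have h3 : (0:ℝ) ≤ (q A.1).toReal := ENNReal.toReal_nonneg
      have h4 : (0:ℝ) ≤ (p A.1).toReal := ENNReal.toReal_nonneg
      exact abs_le.mpr ⟨by linarith, by linarith⟩
    calc (q S).toReal - (p S).toReal ≤ |(q S).toReal - (p S).toReal| := le_abs_self _
      _ ≤ tvDist q p := le_ciSup hbdd ⟨S, hSm⟩
  have hfin : B * ((q S).toReal - (p S).toReal) ≤ B * tvDist q p :=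
    mul_le_mul_of_nonneg_left htv hB.le
  calc W1 (q.map Ψ) (p.map Φ) ≤ B * ((q S).toReal - (p S).toReal) + Ebd := hmain
    _ ≤ B * tvDist q p + Ebd := by linarith
end
end

section
/- Fix d ∈ ℕ, t ≥ 0, Δt > 0, γ ∈ [0, 1) and B > 0. Set σ_γ² = (t+(1+γ)Δt)² − (t+Δt)², φ_γ = N(0, σ_γ²I_d), and λ(γ) = 2Q(B / (2√((t+(1+γ)Δt)² − t²))). Let p and q be Borel probability measures on ℝ^d, and define the ODE gradient-error term E^{ODE} = B·TV(q, p) and the AdaSDE gradient-error term E^{AdaSDE} = B·(1 − λ(γ))·TV(q * φ_γ, p * φ_γ). Then E^{AdaSDE} ≤ E^{ODE}; moreover the inequality is strict whenever γ > 0 and TV(q, p) > 0. -/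
open MeasureTheory

noncomputable section

section Aux

variable {E : Type*} [MeasurableSpace E]

lemma tvDist_nonneg (μ ν : Measure E) : 0 ≤ tvDist μ ν :=
  Real.iSup_nonneg fun _ => abs_nonneg _

lemma aux_abs_le {μ ν : Measure E} (hμ : μ Set.univ ≤ 1) (hν : ν Set.univ ≤ 1) (A : Set E) :
    |(μ A).toReal - (ν A).toReal| ≤ 1 := by
  have h1 : (μ A).toReal ≤ 1 := by
    have := (measure_mono (Set.subset_univ A)).trans hμ
    simpa using ENNReal.toReal_mono ENNReal.one_ne_top this
  have h2 : (ν A).toReal ≤ 1 := by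
    have := (measure_mono (Set.subset_univ A)).trans hν
    simpa using ENNReal.toReal_mono ENNReal.one_ne_top this
  have h3 : 0 ≤ (μ A).toReal := ENNReal.toReal_nonneg
  have h4 : 0 ≤ (ν A).toReal := ENNReal.toReal_nonneg
  rw [abs_le]; constructor <;> linarith

lemma le_tvDist {μ ν : Measure E} (hμ : μ Set.univ ≤ 1) (hν : ν Set.univ ≤ 1)
    {A : Set E} (hA : MeasurableSet A) :
    |(μ A).toReal - (ν A).toReal| ≤ tvDist μ ν := by
  have hbdd : BddAbove (Set.range fun A : {A : Set E // MeasurableSet A} =>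
      |(μ A.1).toReal - (ν A.1).toReal|) :=
    ⟨1, by rintro x ⟨A, rfl⟩; exact aux_abs_le hμ hν A.1⟩
  exact le_ciSup hbdd ⟨A, hA⟩

lemma tvDist_le {μ ν : Measure E} {r : ℝ}
    (h : ∀ A : Set E, MeasurableSet A → |(μ A).toReal - (ν A).toReal| ≤ r) :
    tvDist μ ν ≤ r :=
  ciSup_le (fun A => h A.1 A.2)

lemma tvDist_eq_zero_of_subsingleton [Subsingleton E] {μ ν : Measure E}
    (h : μ Set.univ = ν Set.univ) : tvDist μ ν = 0 := by
  refine le_antisymm (tvDist_le fun A hA => ?_) (tvDist_nonneg μ ν)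
  rcases Set.eq_empty_or_nonempty A with hE | ⟨x, hx⟩
  · simp [hE]
  · have : A = Set.univ := by
      apply Set.eq_univ_of_forall
      intro y
      rwa [Subsingleton.elim y x]
    simp [this, h]

end Aux

lemma tv_conv_le {E : Type*} [MeasurableSpace E] [AddCommMonoid E] [MeasurableAdd₂ E]
    (p q φ : Measure E) [IsProbabilityMeasure p] [IsProbabilityMeasure q]
    (hφ : φ Set.univ ≤ 1) :
    tvDist (q.conv φ) (p.conv φ) ≤ tvDist q p := by
  have hfin : IsFiniteMeasure φ := ⟨lt_of_le_of_lt hφ ENNReal.one_lt_top⟩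
  apply tvDist_le
  intro A hA
  have hs : MeasurableSet ((fun x : E × E => x.1 + x.2) ⁻¹' A) := measurable_add hA
  have key : ∀ (μ : Measure E) [IsProbabilityMeasure μ],
      ((μ.conv φ) A).toReal = ∫ y, (μ ((fun x => (x, y)) ⁻¹' ((fun x : E × E => x.1 + x.2) ⁻¹' A))).toReal ∂φ := by
    intro μ _
    have h1 : (μ.conv φ) A = ∫⁻ y, μ ((fun x => (x, y)) ⁻¹' ((fun x : E × E => x.1 + x.2) ⁻¹' A)) ∂φ := by
      rw [Measure.conv, Measure.map_apply measurable_add hA, Measure.prod_apply_symm hs]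
    rw [h1, ← integral_toReal (measurable_measure_prodMk_right hs).aemeasurable]
    exact .of_forall fun y => lt_of_le_of_lt prob_le_one ENNReal.one_lt_top
  rw [key q, key p]
  set f : E → ℝ := fun y => (q ((fun x => (x, y)) ⁻¹' ((fun x : E × E => x.1 + x.2) ⁻¹' A))).toReal with hf
  set g : E → ℝ := fun y => (p ((fun x => (x, y)) ⁻¹' ((fun x : E × E => x.1 + x.2) ⁻¹' A))).toReal with hg
  have hfb : ∀ y, 0 ≤ f y ∧ f y ≤ 1 := fun y =>
    ⟨ENNReal.toReal_nonneg, by simpa using ENNReal.toReal_mono ENNReal.one_ne_top (prob_le_one)⟩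
  have hgb : ∀ y, 0 ≤ g y ∧ g y ≤ 1 := fun y =>
    ⟨ENNReal.toReal_nonneg, by simpa using ENNReal.toReal_mono ENNReal.one_ne_top (prob_le_one)⟩
  have hfi : Integrable f φ := by
    refine Integrable.mono' (integrable_const (1:ℝ))
      (measurable_measure_prodMk_right hs).ennreal_toReal.aestronglyMeasurable
      (.of_forall fun y => ?_)
    rw [Real.norm_eq_abs, abs_of_nonneg (hfb y).1]; exact (hfb y).2
  have hgi : Integrable g φ := by
    refine Integrable.mono' (integrable_const (1:ℝ))
      (measurable_measure_prodMk_right hs).ennreal_toReal.aestronglyMeasurable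
      (.of_forall fun y => ?_)
    rw [Real.norm_eq_abs, abs_of_nonneg (hgb y).1]; exact (hgb y).2
  have hpt : ∀ y, |f y - g y| ≤ tvDist q p := fun y =>
    le_tvDist prob_le_one prob_le_one (measurable_prodMk_right hs)
  have huniv : (φ Set.univ).toReal ≤ 1 := by
    simpa using ENNReal.toReal_mono ENNReal.one_ne_top hφ
  calc |∫ y, f y ∂φ - ∫ y, g y ∂φ| = |∫ y, (f y - g y) ∂φ| := by rw [integral_sub hfi hgi]
    _ ≤ ∫ y, |f y - g y| ∂φ := by
        simpa using norm_integral_le_integral_norm (μ := φ) (fun y => f y - g y)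
    _ ≤ ∫ _, tvDist q p ∂φ := integral_mono (hfi.sub hgi).abs (integrable_const _) hpt
    _ = (φ Set.univ).toReal * tvDist q p := by rw [integral_const]; rfl
    _ ≤ tvDist q p := mul_le_of_le_one_left (tvDist_nonneg q p) huniv


lemma gaussQ_pos (r : ℝ) : 0 < gaussQ r := by
  rw [gaussQ]
  refine ENNReal.toReal_pos ?_ (measure_ne_top _ _)
  rw [ProbabilityTheory.gaussianReal_apply 0 one_ne_zero]
  refine ((lintegral_pos_iff_support (ProbabilityTheory.measurable_gaussianPDF 0 1)).mpr ?_).ne'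
  have hsupp : Function.support (ProbabilityTheory.gaussianPDF 0 1) = Set.univ := by
    ext x
    simp only [Function.mem_support, Set.mem_univ, iff_true, ProbabilityTheory.gaussianPDF,
      ne_eq, ENNReal.ofReal_eq_zero, not_le]
    exact ProbabilityTheory.gaussianPDFReal_pos 0 1 x one_ne_zero
  rw [hsupp, Measure.restrict_apply_univ, Real.volume_Ici]
  exact ENNReal.zero_lt_top

lemma gaussQ_nonneg (r : ℝ) : 0 ≤ gaussQ r := ENNReal.toReal_nonneg

lemma gaussianE_univ_le (d : ℕ) (σ2 : ℝ) (hσ : 0 ≤ σ2) (h : σ2 ≠ 0 ∨ d ≠ 0) :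
    gaussianE d 0 σ2 Set.univ ≤ 1 := by
  rcases eq_or_lt_of_le hσ with hσ0 | hσpos
  · -- σ2 = 0, so d ≠ 0 and the density vanishes
    have hd : d ≠ 0 := by
      rcases h with h | h
      · exact absurd hσ0.symm h
      · exact h
    have hzero : (fun x : EuclideanSpace ℝ (Fin d) =>
        ENNReal.ofReal ((2 * Real.pi * σ2) ^ (-(d : ℝ) / 2) *
          Real.exp (-‖x - 0‖ ^ 2 / (2 * σ2)))) = fun _ => 0 := by
      funext x
      have hdpos : (0:ℝ) < d := by exact_mod_cast Nat.pos_of_ne_zero hd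
      have hexp : -(d : ℝ) / 2 ≠ 0 := by
        have : -(d:ℝ) / 2 < 0 := by linarith
        exact this.ne
      rw [← hσ0]
      simp [Real.zero_rpow hexp]
    rw [gaussianE, hzero]
    simp
  · -- σ2 > 0 : genuine Gaussian, total mass 1
    set b : ℝ := 1 / (2 * σ2) with hb
    have hbpos : 0 < b := by positivity
    have h2πσ : 0 < 2 * Real.pi * σ2 := by positivity
    set c : ℝ := (2 * Real.pi * σ2) ^ (-(d : ℝ) / 2) with hc
    have hcpos : 0 < c := Real.rpow_pos_of_pos h2πσ _
    have hfun : ∀ x : EuclideanSpace ℝ (Fin d),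
        c * Real.exp (-‖x - 0‖ ^ 2 / (2 * σ2)) = c * Real.exp (-b * ‖x‖ ^ 2) := by
      intro x
      rw [sub_zero]
      congr 1
      rw [hb]
      field_simp
    have hint : Integrable (fun v : EuclideanSpace ℝ (Fin d) => Real.exp (-b * ‖v‖ ^ 2)) := by
      have h1 : Integrable (fun v : EuclideanSpace ℝ (Fin d) =>
          Complex.exp (-(b:ℂ) * (‖v‖:ℂ) ^ 2)) := by
        simpa using GaussianFourier.integrable_cexp_neg_mul_sq_norm_add (b := (b:ℂ))
          (by simpa using hbpos) 0 (0 : EuclideanSpace ℝ (Fin d))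
      refine h1.norm.congr (Filter.Eventually.of_forall fun v => ?_)
      simp [Complex.norm_exp, ← Complex.ofReal_pow]
    have hIval : ∫ v : EuclideanSpace ℝ (Fin d), Real.exp (-b * ‖v‖ ^ 2)
        = (Real.pi / b) ^ ((d : ℝ) / 2) := by
      rw [GaussianFourier.integral_rexp_neg_mul_sq_norm hbpos, finrank_euclideanSpace_fin]
    have hπb : Real.pi / b = 2 * Real.pi * σ2 := by
      rw [hb]; field_simp
    have hlin : ∫⁻ x : EuclideanSpace ℝ (Fin d),
        ENNReal.ofReal (c * Real.exp (-‖x - 0‖ ^ 2 / (2 * σ2))) = 1 := by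
      have heq : (fun x : EuclideanSpace ℝ (Fin d) =>
          ENNReal.ofReal (c * Real.exp (-‖x - 0‖ ^ 2 / (2 * σ2))))
          = fun x => ENNReal.ofReal (c * Real.exp (-b * ‖x‖ ^ 2)) := by
        funext x; rw [hfun x]
      rw [heq, ← ofReal_integral_eq_lintegral_ofReal (hint.const_mul c)
        (Filter.Eventually.of_forall fun x => by positivity)]
      rw [integral_const_mul, hIval, hπb, hc, ← Real.rpow_add h2πσ]
      have he0 : -(d:ℝ)/2 + (d:ℝ)/2 = 0 := by ring
      rw [he0, Real.rpow_zero, ENNReal.ofReal_one]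
    rw [gaussianE, withDensity_apply _ MeasurableSet.univ, Measure.restrict_univ, hlin]

/-- TV comparison of gradient-error terms, AdaSDE vs. ODE:
`E^{AdaSDE} = B(1−λ(γ))·TV(q ∗ φ_γ, p ∗ φ_γ) ≤ B·TV(q, p) = E^{ODE}`, with strict
inequality whenever `γ > 0` and `TV(q, p) > 0`. -/
theorem gradient_error_comparison (d : ℕ) (t Δt γ B : ℝ)
    (ht : 0 ≤ t) (hΔt : 0 < Δt) (hγ : γ ∈ Set.Ico (0 : ℝ) 1) (hB : 0 < B)
    (p q : Measure (EuclideanSpace ℝ (Fin d)))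
    [IsProbabilityMeasure p] [IsProbabilityMeasure q] :
    B * (1 - 2 * gaussQ (B / (2 * Real.sqrt ((t + (1 + γ) * Δt) ^ 2 - t ^ 2)))) *
        tvDist (Measure.conv q (gaussianE d 0 ((t + (1 + γ) * Δt) ^ 2 - (t + Δt) ^ 2)))
          (Measure.conv p (gaussianE d 0 ((t + (1 + γ) * Δt) ^ 2 - (t + Δt) ^ 2)))
      ≤ B * tvDist q p ∧
    (0 < γ → 0 < tvDist q p →
      B * (1 - 2 * gaussQ (B / (2 * Real.sqrt ((t + (1 + γ) * Δt) ^ 2 - t ^ 2)))) *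
          tvDist (Measure.conv q (gaussianE d 0 ((t + (1 + γ) * Δt) ^ 2 - (t + Δt) ^ 2)))
            (Measure.conv p (gaussianE d 0 ((t + (1 + γ) * Δt) ^ 2 - (t + Δt) ^ 2)))
        < B * tvDist q p) := by
  obtain ⟨hγ0, hγ1⟩ := hγ
  set σ2 : ℝ := (t + (1 + γ) * Δt) ^ 2 - (t + Δt) ^ 2 with hσ2def
  set r : ℝ := B / (2 * Real.sqrt ((t + (1 + γ) * Δt) ^ 2 - t ^ 2)) with hrdef
  set φ : Measure (EuclideanSpace ℝ (Fin d)) := gaussianE d 0 σ2 with hφdef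
  set Q : ℝ := gaussQ r with hQdef
  haveI hsf : SFinite φ := by rw [hφdef]; unfold gaussianE; infer_instance
  have hQpos : 0 < Q := gaussQ_pos r
  have hT0 : 0 ≤ tvDist q p := tvDist_nonneg q p
  have hTc0 : 0 ≤ tvDist (q.conv φ) (p.conv φ) := tvDist_nonneg _ _
  have hσ2 : 0 ≤ σ2 := by
    rw [hσ2def]
    nlinarith [mul_nonneg hγ0 hΔt.le]
  have hle : tvDist (q.conv φ) (p.conv φ) ≤ tvDist q p := by
    by_cases hd : d = 0
    · subst hd
      have hsub : Subsingleton (EuclideanSpace ℝ (Fin 0)) := by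
        constructor
        intro a b
        ext i
        exact absurd i.2 (by simp)
      have huniv : ∀ (μ : Measure (EuclideanSpace ℝ (Fin 0))) [IsProbabilityMeasure μ],
          (μ.conv φ) Set.univ = φ Set.univ := by
        intro μ _
        rw [Measure.conv, Measure.map_apply measurable_add MeasurableSet.univ,
          Set.preimage_univ, ← Set.univ_prod_univ, Measure.prod_prod, measure_univ, one_mul]
      rw [tvDist_eq_zero_of_subsingleton ((huniv q).trans (huniv p).symm)]
      exact hT0
    · exact tv_conv_le p q φ (gaussianE_univ_le d σ2 hσ2 (Or.inr hd))
  refine ⟨?_, fun _ hTpos => ?_⟩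
  · nlinarith [mul_le_mul_of_nonneg_left hle hB.le,
      mul_nonneg (mul_nonneg hB.le hQpos.le) hTc0]
  · nlinarith [mul_pos hB hTpos, mul_le_mul_of_nonneg_left hle hB.le,
      mul_nonneg (mul_nonneg hB.le hQpos.le) hTc0,
      mul_nonneg hB.le (sub_nonneg.mpr hle),
      mul_pos (mul_pos (mul_pos hB hB) hQpos) hTpos]
end
end

section
/- Fix d ∈ ℕ, t ≥ 0, Δt > 0, constants L₀, L₁, L₂, ε ≥ 0, and let F, G : ℝ^d × ℝ → ℝ^d satisfy the drift assumptions on [t, t+Δt]. Let x : [t, t+Δt] → ℝ^d be a solution of the exact backward ODE x'(s) = −G(x(s), s), and let x̄ : [t, t+Δt] → ℝ^d be the frozen-drift (single-step) solution x̄'(s) = −F(x̄(t+Δt), t+Δt), i.e., x̄(t) = x̄(t+Δt) + Δt·F(x̄(t+Δt), t+Δt). Then ‖x(t) − x̄(t)‖ ≤ e^{L₂Δt}·(‖x(t+Δt) − x̄(t+Δt)‖ + (Δt·(L₂L₁ + L₀) + ε)·Δt). -/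
open MeasureTheory

noncomputable section

/-- One-step ODE discretization error bound: if `x` solves the exact
backward ODE `x'(s) = −G(x(s), s)` on `[t, t+Δt]` and `x̄` is the frozen-drift solution
`x̄'(s) = −F(x̄(t+Δt), t+Δt)`, then
`‖x(t) − x̄(t)‖ ≤ e^{L₂Δt}·(‖x(t+Δt) − x̄(t+Δt)‖ + (Δt(L₂L₁ + L₀) + ε)Δt)`. -/
theorem ode_discretization_error (d : ℕ) (t Δt L0 L1 L2 ε : ℝ)
    (ht : 0 ≤ t) (hΔt : 0 < Δt)
    (hL0 : 0 ≤ L0) (hL1 : 0 ≤ L1) (hL2 : 0 ≤ L2) (hε : 0 ≤ ε)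
    (F G : EuclideanSpace ℝ (Fin d) → ℝ → EuclideanSpace ℝ (Fin d))
    (hLip : ∀ x y : EuclideanSpace ℝ (Fin d), ∀ s ∈ Set.Icc t (t + Δt),
      ‖F x s - F y s‖ ≤ L2 * ‖x - y‖)
    (hTime : ∀ x : EuclideanSpace ℝ (Fin d), ∀ s ∈ Set.Icc t (t + Δt),
      ∀ s' ∈ Set.Icc t (t + Δt), ‖F x s - F x s'‖ ≤ L0 * |s - s'|)
    (hBdd : ∀ x : EuclideanSpace ℝ (Fin d), ∀ s ∈ Set.Icc t (t + Δt), ‖F x s‖ ≤ L1)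
    (hApprox : ∀ x : EuclideanSpace ℝ (Fin d), ∀ s ∈ Set.Icc t (t + Δt),
      ‖F x s - G x s‖ ≤ ε)
    (x xb : ℝ → EuclideanSpace ℝ (Fin d))
    (hx : ∀ s ∈ Set.Icc t (t + Δt),
      HasDerivWithinAt x (-(G (x s) s)) (Set.Icc t (t + Δt)) s)
    (hxb : ∀ s ∈ Set.Icc t (t + Δt),
      HasDerivWithinAt xb (-(F (xb (t + Δt)) (t + Δt))) (Set.Icc t (t + Δt)) s) :
    ‖x t - xb t‖ ≤ Real.exp (L2 * Δt) *
      (‖x (t + Δt) - xb (t + Δt)‖ + (Δt * (L2 * L1 + L0) + ε) * Δt) := by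
  set T := t + Δt with hTdef
  have htT : t ≤ T := by simp only [hTdef]; linarith
  have hTmem : T ∈ Set.Icc t T := ⟨htT, le_refl T⟩
  set v := F (xb T) T with hv
  have hvnorm : ‖v‖ ≤ L1 := hBdd _ T hTmem
  set δbig : ℝ := (L2 * L1 + L0) * Δt + ε with hδbig
  have hδbig0 : 0 ≤ δbig := by positivity
  -- xb moves with bounded speed
  have hxbdiff : ∀ s ∈ Set.Icc t T, ‖xb s - xb T‖ ≤ L1 * (T - s) := by
    intro s hs
    have h := Convex.norm_image_sub_le_of_norm_hasDerivWithin_le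
      (f := xb) (f' := fun _ => -v) (C := L1) (fun u hu => hxb u hu)
      (fun u _ => by rw [norm_neg]; exact hvnorm) (convex_Icc t T) hTmem hs
    calc ‖xb s - xb T‖ ≤ L1 * ‖s - T‖ := h
      _ = L1 * (T - s) := by rw [Real.norm_eq_abs, abs_sub_comm, abs_of_nonneg (by linarith [hs.2])]
  -- drift bound
  have hdrift : ∀ s ∈ Set.Icc t T, ‖G (x s) s - v‖ ≤ L2 * ‖x s - xb s‖ + δbig := by
    intro s hs
    have h1 : ‖G (x s) s - F (x s) s‖ ≤ ε := by
      rw [norm_sub_rev]; exact hApprox _ s hs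
    have h2 : ‖F (x s) s - F (xb s) s‖ ≤ L2 * ‖x s - xb s‖ := hLip _ _ s hs
    have h3 : ‖F (xb s) s - F (xb T) s‖ ≤ L2 * (L1 * (T - s)) := by
      calc ‖F (xb s) s - F (xb T) s‖ ≤ L2 * ‖xb s - xb T‖ := hLip _ _ s hs
        _ ≤ L2 * (L1 * (T - s)) := by
            exact mul_le_mul_of_nonneg_left (hxbdiff s hs) hL2
    have h4 : ‖F (xb T) s - v‖ ≤ L0 * (T - s) := by
      have := hTime (xb T) s hs T hTmem
      rwa [abs_sub_comm, abs_of_nonneg (by linarith [hs.2])] at this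
    have hTs : T - s ≤ Δt := by
      have := hs.1; simp only [hTdef]; linarith
    calc ‖G (x s) s - v‖
        = ‖(G (x s) s - F (x s) s) + (F (x s) s - F (xb s) s)
            + (F (xb s) s - F (xb T) s) + (F (xb T) s - v)‖ := by abel_nf
      _ ≤ ‖(G (x s) s - F (x s) s) + (F (x s) s - F (xb s) s)
            + (F (xb s) s - F (xb T) s)‖ + ‖F (xb T) s - v‖ := norm_add_le _ _
      _ ≤ ‖(G (x s) s - F (x s) s) + (F (x s) s - F (xb s) s)‖
            + ‖F (xb s) s - F (xb T) s‖ + ‖F (xb T) s - v‖ := by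
          gcongr; exact norm_add_le _ _
      _ ≤ ‖G (x s) s - F (x s) s‖ + ‖F (x s) s - F (xb s) s‖
            + ‖F (xb s) s - F (xb T) s‖ + ‖F (xb T) s - v‖ := by
          gcongr; exact norm_add_le _ _
      _ ≤ ε + L2 * ‖x s - xb s‖ + L2 * (L1 * (T - s)) + L0 * (T - s) := by
          gcongr
      _ ≤ L2 * ‖x s - xb s‖ + δbig := by
          have h5 : L2 * (L1 * (T - s)) ≤ L2 * L1 * Δt := by
            rw [← mul_assoc]
            exact mul_le_mul_of_nonneg_left hTs (by positivity)
          have h6 : L0 * (T - s) ≤ L0 * Δt := mul_le_mul_of_nonneg_left hTs hL0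
          simp only [hδbig]; nlinarith
  -- the reversed-time difference function
  set y : ℝ → EuclideanSpace ℝ (Fin d) := fun u => x (T - u) - xb (T - u) with hy
  have hmaps : Set.MapsTo (fun u : ℝ => T - u) (Set.Icc 0 Δt) (Set.Icc t T) := by
    intro u hu
    simp only [hTdef] at *
    constructor <;> [linarith [hu.2]; linarith [hu.1]]
  have hyderiv : ∀ u ∈ Set.Icc 0 Δt,
      HasDerivWithinAt y (G (x (T - u)) (T - u) - v) (Set.Icc 0 Δt) u := by
    intro u hu
    have hg : HasDerivWithinAt (fun u : ℝ => T - u) (-1) (Set.Icc 0 Δt) u := by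
      exact ((hasDerivAt_id' u).const_sub T).hasDerivWithinAt
    have hTu : T - u ∈ Set.Icc t T := hmaps hu
    have h1 : HasDerivWithinAt (fun u : ℝ => x (T - u)) (G (x (T - u)) (T - u))
        (Set.Icc 0 Δt) u := by
      have := (hx (T - u) hTu).scomp u hg hmaps
      simpa [Function.comp_def] using this
    have h2 : HasDerivWithinAt (fun u : ℝ => xb (T - u)) v (Set.Icc 0 Δt) u := by
      have := (hxb (T - u) hTu).scomp u hg hmaps
      simpa [Function.comp_def] using this
    exact h1.sub h2
  have hcont : ContinuousOn y (Set.Icc 0 Δt) :=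
    fun u hu => ((hyderiv u hu).continuousWithinAt)
  have hyderiv' : ∀ u ∈ Set.Ico 0 Δt,
      HasDerivWithinAt y (G (x (T - u)) (T - u) - v) (Set.Ici u) u := by
    intro u hu
    apply (hyderiv u ⟨hu.1, hu.2.le⟩).mono_of_mem_nhdsWithin
    have : Set.Icc u Δt ∈ nhdsWithin u (Set.Ici u) :=
      Icc_mem_nhdsGE_of_mem ⟨le_refl u, hu.2⟩
    exact Filter.mem_of_superset this (Set.Icc_subset_Icc_left hu.1)
  have hbound : ∀ u ∈ Set.Ico 0 Δt,
      ‖G (x (T - u)) (T - u) - v‖ ≤ L2 * ‖y u‖ + δbig := by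
    intro u hu
    exact hdrift (T - u) (hmaps ⟨hu.1, hu.2.le⟩)
  have hgron := norm_le_gronwallBound_of_norm_deriv_right_le hcont hyderiv'
    (le_refl ‖y 0‖) hbound Δt ⟨hΔt.le, le_refl Δt⟩
  have hy0 : ‖y 0‖ = ‖x T - xb T‖ := by simp [hy]
  have hyΔt : y Δt = x t - xb t := by simp [hy, hTdef]
  rw [hyΔt, hy0] at hgron
  rw [sub_zero] at hgron
  refine hgron.trans ?_
  set δ0 := ‖x T - xb T‖ with hδ0
  have hδ00 : 0 ≤ δ0 := norm_nonneg _
  -- final gronwallBound estimate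
  have key : gronwallBound δ0 L2 δbig Δt ≤ Real.exp (L2 * Δt) * (δ0 + δbig * Δt) := by
    rcases eq_or_lt_of_le hL2 with hK | hK
    · rw [← hK, gronwallBound_K0]
      simp
    · rw [gronwallBound_of_K_ne_0 hK.ne']
      have hexp : Real.exp (L2 * Δt) - 1 ≤ L2 * Δt * Real.exp (L2 * Δt) := by
        have h := Real.add_one_le_exp (-(L2 * Δt))
        have hpos : (0:ℝ) < Real.exp (L2 * Δt) := Real.exp_pos _
        have := mul_le_mul_of_nonneg_left h hpos.le
        rw [mul_add, ← Real.exp_add] at this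
        simp at this
        nlinarith
      have : δbig / L2 * (Real.exp (L2 * Δt) - 1) ≤ δbig * Δt * Real.exp (L2 * Δt) := by
        rw [div_mul_eq_mul_div, div_le_iff₀ hK]
        calc δbig * (Real.exp (L2 * Δt) - 1) ≤ δbig * (L2 * Δt * Real.exp (L2 * Δt)) :=
            mul_le_mul_of_nonneg_left hexp hδbig0
          _ = δbig * Δt * Real.exp (L2 * Δt) * L2 := by ring
      nlinarith [Real.exp_pos (L2 * Δt)]
  calc gronwallBound δ0 L2 δbig Δt ≤ Real.exp (L2 * Δt) * (δ0 + δbig * Δt) := key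
    _ = Real.exp (L2 * Δt) * (δ0 + (Δt * (L2 * L1 + L0) + ε) * Δt) := by
        simp only [hδbig]; ring
end
end

section
/- Fix d ∈ ℕ, t ≥ 0, Δt > 0, γ ∈ (0, 1), constants L₀, L₁, L₂, ε ≥ 0, and let F, G : ℝ^d × ℝ → ℝ^d satisfy the drift assumptions on [t, t+(1+γ)Δt]. Let z ∈ ℝ^d, let x : [t, t+(1+γ)Δt] → ℝ^d solve the exact backward ODE x'(s) = −G(x(s), s) with x(t+(1+γ)Δt) = z, and let x̂(t) = z + (1+γ)Δt·F(z, t+(1+γ)Δt) be the frozen-drift (single-step) approximation started from the same point z. Then ‖x(t) − x̂(t)‖ ≤ e^{(1+γ)L₂Δt}·(1+γ)·((1+γ)Δt·(L₂L₁ + L₀) + ε)·Δt. -/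
open MeasureTheory

noncomputable section

lemma exp_sub_one_le_aux (u : ℝ) : Real.exp u - 1 ≤ u * Real.exp u := by
  have hm : Real.exp u * Real.exp (-u) = 1 := by rw [← Real.exp_add]; simp
  nlinarith [Real.add_one_le_exp (-u), Real.exp_pos u]

/-- AdaSDE single-step error propagation over the stretched interval
`[t, t+(1+γ)Δt]`: if `x` solves the exact backward ODE with terminal condition
`x(t+(1+γ)Δt) = z` and `x̂(t) = z + (1+γ)Δt·F(z, t+(1+γ)Δt)` is the frozen-drift
approximation from the same point, then
`‖x(t) − x̂(t)‖ ≤ e^{(1+γ)L₂Δt}·(1+γ)·((1+γ)Δt·(L₂L₁ + L₀) + ε)·Δt`. -/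
theorem adasde_error_propagation (d : ℕ) (t Δt γ L0 L1 L2 ε : ℝ)
    (ht : 0 ≤ t) (hΔt : 0 < Δt) (hγ : γ ∈ Set.Ioo (0 : ℝ) 1)
    (hL0 : 0 ≤ L0) (hL1 : 0 ≤ L1) (hL2 : 0 ≤ L2) (hε : 0 ≤ ε)
    (F G : EuclideanSpace ℝ (Fin d) → ℝ → EuclideanSpace ℝ (Fin d))
    (hLip : ∀ x y : EuclideanSpace ℝ (Fin d), ∀ s ∈ Set.Icc t (t + (1 + γ) * Δt),
      ‖F x s - F y s‖ ≤ L2 * ‖x - y‖)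
    (hTime : ∀ x : EuclideanSpace ℝ (Fin d), ∀ s ∈ Set.Icc t (t + (1 + γ) * Δt),
      ∀ s' ∈ Set.Icc t (t + (1 + γ) * Δt), ‖F x s - F x s'‖ ≤ L0 * |s - s'|)
    (hBdd : ∀ x : EuclideanSpace ℝ (Fin d), ∀ s ∈ Set.Icc t (t + (1 + γ) * Δt),
      ‖F x s‖ ≤ L1)
    (hApprox : ∀ x : EuclideanSpace ℝ (Fin d), ∀ s ∈ Set.Icc t (t + (1 + γ) * Δt),
      ‖F x s - G x s‖ ≤ ε)
    (z : EuclideanSpace ℝ (Fin d)) (x : ℝ → EuclideanSpace ℝ (Fin d))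
    (hx : ∀ s ∈ Set.Icc t (t + (1 + γ) * Δt),
      HasDerivWithinAt x (-(G (x s) s)) (Set.Icc t (t + (1 + γ) * Δt)) s)
    (hxend : x (t + (1 + γ) * Δt) = z) :
    ‖x t - (z + ((1 + γ) * Δt) • F z (t + (1 + γ) * Δt))‖
      ≤ Real.exp ((1 + γ) * L2 * Δt) * (1 + γ) *
          ((1 + γ) * Δt * (L2 * L1 + L0) + ε) * Δt := by
  have hγ1 : (0:ℝ) < 1 + γ := by linarith [hγ.1]
  set h := (1 + γ) * Δt with hh
  have hhpos : 0 < h := mul_pos hγ1 hΔt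
  set T := t + h with hTdef
  set c := F z T with hc
  set ε' := h * (L2 * L1 + L0) + ε with hε'
  have hε'nonneg : 0 ≤ ε' := by
    have : 0 ≤ h * (L2 * L1 + L0) := by positivity
    linarith
  set w : ℝ → EuclideanSpace ℝ (Fin d) := fun τ => x (T - τ) - (z + τ • c) with hwdef
  have hmem : ∀ τ ∈ Set.Icc (0:ℝ) h, T - τ ∈ Set.Icc t T := by
    intro τ hτ
    exact ⟨by simp only [hTdef]; linarith [hτ.2], by linarith [hτ.1]⟩
  have hTmem : T ∈ Set.Icc t T := ⟨by simp only [hTdef]; linarith, le_refl T⟩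
  have hwderiv : ∀ τ ∈ Set.Icc (0:ℝ) h,
      HasDerivWithinAt w (G (x (T - τ)) (T - τ) - c) (Set.Icc 0 h) τ := by
    intro τ hτ
    have hinner : HasDerivWithinAt (fun τ' : ℝ => T - τ') (-1 : ℝ) (Set.Icc 0 h) τ :=
      ((hasDerivAt_id τ).const_sub T).hasDerivWithinAt
    have h1 := (hx _ (hmem τ hτ)).scomp τ hinner (fun τ' hτ' => hmem τ' hτ')
    have h1' : HasDerivWithinAt (fun τ' => x (T - τ')) (G (x (T - τ)) (T - τ))
        (Set.Icc 0 h) τ := by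
      simpa [Function.comp_def, neg_smul, one_smul] using h1
    have h2 : HasDerivWithinAt (fun τ' : ℝ => z + τ' • c) c (Set.Icc 0 h) τ := by
      simpa using (((hasDerivAt_id τ).smul_const c).const_add z).hasDerivWithinAt
    exact h1'.sub h2
  have hcnorm : ‖c‖ ≤ L1 := hBdd z T hTmem
  have hbound : ∀ τ ∈ Set.Ico (0:ℝ) h,
      ‖G (x (T - τ)) (T - τ) - c‖ ≤ L2 * ‖w τ‖ + ε' := by
    intro τ hτ
    have hτ' : τ ∈ Set.Icc (0:ℝ) h := ⟨hτ.1, hτ.2.le⟩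
    have hs : T - τ ∈ Set.Icc t T := hmem τ hτ'
    set s := T - τ with hsdef
    have e1 : ‖G (x s) s - F (x s) s‖ ≤ ε := by
      rw [norm_sub_rev]; exact hApprox _ _ hs
    have e2 : ‖F (x s) s - F (z + τ • c) s‖ ≤ L2 * ‖w τ‖ := hLip _ _ _ hs
    have e3 : ‖F (z + τ • c) s - F z s‖ ≤ L2 * (τ * L1) := by
      have h3 := hLip (z + τ • c) z s hs
      have hn : ‖(z + τ • c) - z‖ = τ * ‖c‖ := by
        rw [add_sub_cancel_left, norm_smul, Real.norm_eq_abs, abs_of_nonneg hτ.1]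
      rw [hn] at h3
      calc ‖F (z + τ • c) s - F z s‖ ≤ L2 * (τ * ‖c‖) := h3
        _ ≤ L2 * (τ * L1) := by
            apply mul_le_mul_of_nonneg_left _ hL2
            exact mul_le_mul_of_nonneg_left hcnorm hτ.1
    have e4 : ‖F z s - F z T‖ ≤ L0 * τ := by
      have h4 := hTime z s hs T hTmem
      have habs : |s - T| = τ := by
        rw [hsdef]
        rw [show T - τ - T = -τ by ring, abs_neg, abs_of_nonneg hτ.1]
      rw [habs] at h4
      exact h4
    have tri : ‖G (x s) s - c‖ ≤ ‖G (x s) s - F (x s) s‖ + ‖F (x s) s - F (z + τ • c) s‖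
        + ‖F (z + τ • c) s - F z s‖ + ‖F z s - F z T‖ := by
      have hdecomp : G (x s) s - c = (G (x s) s - F (x s) s) + (F (x s) s - F (z + τ • c) s)
          + (F (z + τ • c) s - F z s) + (F z s - F z T) := by rw [hc]; abel
      rw [hdecomp]
      exact le_trans (norm_add_le _ _) (by
        refine add_le_add (le_trans (norm_add_le _ _) ?_) le_rfl
        exact add_le_add (norm_add_le _ _) le_rfl)
    have hτh : τ ≤ h := hτ.2.le
    have q1 : L2 * L1 * τ ≤ L2 * L1 * h := mul_le_mul_of_nonneg_left hτh (mul_nonneg hL2 hL1)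
    have q2 : L0 * τ ≤ L0 * h := mul_le_mul_of_nonneg_left hτh hL0
    have hq : L2 * (τ * L1) + L0 * τ ≤ h * (L2 * L1 + L0) := by nlinarith [q1, q2]
    calc ‖G (x s) s - c‖ ≤ ε + L2 * ‖w τ‖ + L2 * (τ * L1) + L0 * τ := by linarith
      _ ≤ L2 * ‖w τ‖ + ε' := by rw [hε']; linarith
  have hcont : ContinuousOn w (Set.Icc 0 h) :=
    fun τ hτ => (hwderiv τ hτ).continuousWithinAt
  have hderiv' : ∀ τ ∈ Set.Ico (0:ℝ) h,
      HasDerivWithinAt w (G (x (T - τ)) (T - τ) - c) (Set.Ici τ) τ := by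
    intro τ hτ
    exact (hwderiv τ ⟨hτ.1, hτ.2.le⟩).mono_of_mem_nhdsWithin (Icc_mem_nhdsGE_of_mem hτ)
  have hw0 : ‖w 0‖ ≤ 0 := by
    simp [hwdef, show T - 0 = T from sub_zero T, hxend]
  have key := norm_le_gronwallBound_of_norm_deriv_right_le hcont hderiv' hw0 hbound h
    ⟨hhpos.le, le_refl h⟩
  rw [sub_zero] at key
  have hwh : w h = x t - (z + h • c) := by
    simp only [hwdef]
    rw [show T - h = t by rw [hTdef]; ring]
  have hgb : gronwallBound 0 L2 ε' h ≤ Real.exp (L2 * h) * ε' * h := by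
    rcases eq_or_lt_of_le hL2 with hK0 | hKpos
    · rw [← hK0, gronwallBound_K0]
      simp
    · rw [gronwallBound_of_K_ne_0 (ne_of_gt hKpos)]
      simp only [zero_mul, zero_add]
      rw [div_mul_eq_mul_div, div_le_iff₀ hKpos]
      have hkey := exp_sub_one_le_aux (L2 * h)
      nlinarith [mul_le_mul_of_nonneg_left hkey hε'nonneg]
  have hfinal : Real.exp (L2 * h) * ε' * h
      = Real.exp ((1 + γ) * L2 * Δt) * (1 + γ) * ((1 + γ) * Δt * (L2 * L1 + L0) + ε) * Δt := by
    rw [hε', hh, show L2 * ((1 + γ) * Δt) = (1 + γ) * L2 * Δt by ring]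
    ring
  rw [← hfinal]
  calc ‖x t - (z + h • c)‖ = ‖w h‖ := by rw [hwh]
    _ ≤ gronwallBound 0 L2 ε' h := key
    _ ≤ Real.exp (L2 * h) * ε' * h := hgb
end
end

section
/- Let d ∈ ℕ, x, y ∈ ℝ^d and σ > 0. Then the total variation distance between the two isotropic Gaussian measures with common covariance σ²I_d and means x and y satisfies TV(N(x, σ²I_d), N(y, σ²I_d)) = 1 − 2Q(‖x − y‖ / (2σ)). -/
open MeasureTheory

noncomputable section

open Set ProbabilityTheory

lemma lintegral_fin_prod {n : ℕ} (f : Fin n → ℝ → ENNReal) (hf : ∀ i, Measurable (f i)) :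
    ∫⁻ w : Fin n → ℝ, ∏ i, f i (w i) = ∏ i, ∫⁻ t, f i t := by
  induction n with
  | zero =>
      simp [volume_pi, lintegral_const, Measure.pi_empty_univ]
  | succ n ih =>
      have hmp := (measurePreserving_piFinSuccAbove (fun _ : Fin (n+1) => (volume : Measure ℝ)) 0).symm
      have hmeas : Measurable fun w : Fin (n+1) → ℝ => ∏ i, f i (w i) :=
        Finset.measurable_prod _ fun i _ => (hf i).comp (measurable_pi_apply i)
      rw [volume_pi, ← hmp.lintegral_comp hmeas]
      simp_rw [MeasurableEquiv.piFinSuccAbove_symm_apply, Fin.insertNthEquiv,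
        Fin.insertNth_zero]
      simp only [Fin.zero_succAbove, Equiv.coe_fn_mk, Fin.cons_zero, Fin.cons_succ, cast_eq,
        Fin.prod_univ_succ]
      rw [lintegral_prod_mul (f := f 0) (g := fun r : Fin n → ℝ => ∏ i, f i.succ (r i))
        (hf 0).aemeasurable
        (Finset.measurable_prod _ fun i _ => (hf i.succ).comp (measurable_pi_apply i)).aemeasurable]
      rw [show (Measure.pi fun _ : Fin n => (volume : Measure ℝ)) = volume from rfl,
        ih (fun i => f i.succ) (fun i => hf i.succ)]

lemma dens_eq (d : ℕ) (σ : ℝ) (hσ : 0 < σ)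
    (b : OrthonormalBasis (Fin d) ℝ (EuclideanSpace ℝ (Fin d)))
    (q z : EuclideanSpace ℝ (Fin d)) :
    ENNReal.ofReal ((2 * Real.pi * σ^2) ^ (-(d : ℝ) / 2) * Real.exp (-‖z - q‖ ^ 2 / (2 * σ^2)))
      = ∏ j, gaussianPDF (b.repr q j) ⟨σ^2, sq_nonneg σ⟩ (b.repr z j) := by
  have hK : 0 < 2 * Real.pi * σ^2 := by positivity
  have h1 : ∀ j, b.repr z j - b.repr q j = b.repr (z - q) j := by
    intro j; rw [map_sub]; rfl
  have h2 : ∑ j, (b.repr z j - b.repr q j)^2 = ‖z - q‖^2 := by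
    simp_rw [h1]
    rw [← b.repr.norm_map (z - q)]
    rw [EuclideanSpace.norm_eq]
    rw [Real.sq_sqrt (by positivity)]
    exact Finset.sum_congr rfl fun j _ => by rw [Real.norm_eq_abs, sq_abs]
  simp only [gaussianPDF, gaussianPDFReal]
  rw [← ENNReal.ofReal_prod_of_nonneg]
  swap
  · intro j _
    positivity
  congr 1
  rw [Finset.prod_mul_distrib, Finset.prod_const, ← Real.exp_sum]
  simp only [show ∀ a ha, NNReal.toReal (⟨a, ha⟩ : NNReal) = a from fun _ _ => rfl]
  congr 1
  · rw [Real.sqrt_eq_rpow, Finset.card_univ, Fintype.card_fin,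
      ← Real.rpow_neg_one,
      ← Real.rpow_natCast (((2*Real.pi*σ^2) ^ ((1:ℝ)/2)) ^ (-1:ℝ)) d,
      ← Real.rpow_mul (by positivity), ← Real.rpow_mul hK.le]
    ring_nf
  · congr 1
    rw [← Finset.sum_div, Finset.sum_neg_distrib, h2]

lemma gaussianE_preimage (d : ℕ) (m : EuclideanSpace ℝ (Fin d)) (σ : ℝ) (hσ : 0 < σ)
    (b : OrthonormalBasis (Fin d) ℝ (EuclideanSpace ℝ (Fin d))) (i₀ : Fin d)
    {T : Set ℝ} (hT : MeasurableSet T) :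
    gaussianE d m (σ^2) {z | b.repr z i₀ ∈ T}
      = gaussianReal (b.repr m i₀) ⟨σ^2, sq_nonneg σ⟩ T := by
  classical
  set v : NNReal := ⟨σ^2, sq_nonneg σ⟩ with hv_def
  have hv : v ≠ 0 := by
    intro h
    have : σ^2 = 0 := congrArg NNReal.toReal h
    exact (pow_ne_zero 2 hσ.ne') this
  have hrm : Measurable fun z : EuclideanSpace ℝ (Fin d) => b.repr z i₀ :=
    ((measurable_pi_apply i₀).comp ((MeasurableEquiv.toLp 2 (Fin d → ℝ)).symm).measurable).comp
      b.repr.continuous.measurable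
  have hSmeas : MeasurableSet {z : EuclideanSpace ℝ (Fin d) | b.repr z i₀ ∈ T} := hrm hT
  -- the factorized density on the pi space
  set G : Fin d → ℝ → ENNReal := fun j =>
    if j = i₀ then T.indicator (gaussianPDF (b.repr m j) v) else gaussianPDF (b.repr m j) v
    with hG_def
  have hGmeas : ∀ j, Measurable (G j) := by
    intro j
    by_cases h : j = i₀ <;> simp only [hG_def, h, if_true, if_false]
    · exact (measurable_gaussianPDF _ _).indicator hT
    · exact measurable_gaussianPDF _ _
  have h_h : ∀ w : Fin d → ℝ,
      ({w : Fin d → ℝ | w i₀ ∈ T}.indicator (fun w => ∏ j, gaussianPDF (b.repr m j) v (w j)) w)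
        = ∏ j, G j (w j) := by
    intro w
    by_cases hw : w i₀ ∈ T
    · rw [Set.indicator_of_mem (show w ∈ {w : Fin d → ℝ | w i₀ ∈ T} from hw)]
      refine Finset.prod_congr rfl fun j _ => ?_
      by_cases h : j = i₀
      · subst h; simp [hG_def, Set.indicator_of_mem hw]
      · simp [hG_def, h]
    · rw [Set.indicator_of_notMem (show w ∉ {w : Fin d → ℝ | w i₀ ∈ T} from hw)]
      symm
      refine Finset.prod_eq_zero (Finset.mem_univ i₀) ?_
      simp [hG_def, Set.indicator_of_notMem hw]
  -- rewrite the measure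
  rw [gaussianE, withDensity_apply _ hSmeas]
  rw [← lintegral_indicator hSmeas]
  have hmeas_pi : Measurable fun w : Fin d → ℝ =>
      ({w : Fin d → ℝ | w i₀ ∈ T}.indicator (fun w => ∏ j, gaussianPDF (b.repr m j) v (w j)) w) :=
    (Finset.measurable_prod _ fun j _ =>
      (measurable_gaussianPDF _ _).comp (measurable_pi_apply j)).indicator
      ((measurable_pi_apply i₀) hT)
  have step1 : ∀ z : EuclideanSpace ℝ (Fin d),
      {z : EuclideanSpace ℝ (Fin d) | b.repr z i₀ ∈ T}.indicator
        (fun z => ENNReal.ofReal ((2 * Real.pi * σ^2) ^ (-(d : ℝ) / 2) *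
          Real.exp (-‖z - m‖ ^ 2 / (2 * σ^2)))) z
      = ({w : Fin d → ℝ | w i₀ ∈ T}.indicator (fun w => ∏ j, gaussianPDF (b.repr m j) v (w j)))
          (((MeasurableEquiv.toLp 2 (Fin d → ℝ)).symm) (b.repr z)) := by
    intro z
    by_cases hz : b.repr z i₀ ∈ T
    · rw [Set.indicator_of_mem (show z ∈ {z : EuclideanSpace ℝ (Fin d) | b.repr z i₀ ∈ T} from hz),
        Set.indicator_of_mem (show ((MeasurableEquiv.toLp 2 (Fin d → ℝ)).symm) (b.repr z)
          ∈ {w : Fin d → ℝ | w i₀ ∈ T} from hz)]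
      exact dens_eq d σ hσ b m z
    · rw [Set.indicator_of_notMem
        (show z ∉ {z : EuclideanSpace ℝ (Fin d) | b.repr z i₀ ∈ T} from hz),
        Set.indicator_of_notMem (show ((MeasurableEquiv.toLp 2 (Fin d → ℝ)).symm) (b.repr z)
          ∉ {w : Fin d → ℝ | w i₀ ∈ T} from hz)]
  calc ∫⁻ z, {z : EuclideanSpace ℝ (Fin d) | b.repr z i₀ ∈ T}.indicator
        (fun z => ENNReal.ofReal ((2 * Real.pi * σ^2) ^ (-(d : ℝ) / 2) *
          Real.exp (-‖z - m‖ ^ 2 / (2 * σ^2)))) z ∂volume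
      = ∫⁻ z, ({w : Fin d → ℝ | w i₀ ∈ T}.indicator
          (fun w => ∏ j, gaussianPDF (b.repr m j) v (w j)))
          (((MeasurableEquiv.toLp 2 (Fin d → ℝ)).symm) (b.repr z)) ∂volume := by
        exact lintegral_congr step1
    _ = ∫⁻ w : Fin d → ℝ, ({w : Fin d → ℝ | w i₀ ∈ T}.indicator
          (fun w => ∏ j, gaussianPDF (b.repr m j) v (w j))) w ∂volume := by
        exact (b.measurePreserving_repr.lintegral_comp
            (hmeas_pi.comp ((MeasurableEquiv.toLp 2 (Fin d → ℝ)).symm).measurable)).trans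
          ((EuclideanSpace.volume_preserving_symm_measurableEquiv_toLp (Fin d)).lintegral_comp hmeas_pi)
    _ = ∫⁻ w : Fin d → ℝ, ∏ j, G j (w j) ∂volume := lintegral_congr h_h
    _ = ∏ j, ∫⁻ t, G j t ∂volume := lintegral_fin_prod G hGmeas
    _ = gaussianReal (b.repr m i₀) v T := by
        rw [Finset.prod_eq_single i₀]
        · simp only [hG_def, if_true]
          rw [lintegral_indicator hT, gaussianReal_apply _ hv T]
        · intro j _ hj
          simp only [hG_def, if_neg hj]
          exact lintegral_gaussianPDF_eq_one _ hv
        · intro h; exact absurd (Finset.mem_univ i₀) h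

lemma gaussianReal_Ici_eq (m c σ : ℝ) (hσ : 0 < σ) :
    gaussianReal m ⟨σ^2, sq_nonneg σ⟩ (Set.Ici c)
      = gaussianReal 0 1 (Set.Ici ((c - m)/σ)) := by
  have h1 : (gaussianReal 0 1).map (fun t => σ * t) = gaussianReal 0 ⟨σ^2, sq_nonneg σ⟩ := by
    rw [show (fun t : ℝ => σ * t) = (σ * ·) from rfl, gaussianReal_map_const_mul σ]
    norm_num
    rfl
  have h2 : (gaussianReal (0:ℝ) ⟨σ^2, sq_nonneg σ⟩).map (· + m)
      = gaussianReal m ⟨σ^2, sq_nonneg σ⟩ := by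
    exact (gaussianReal_map_add_const m).trans (by simp)
  rw [← h2, ← h1, Measure.map_apply (measurable_add_const m) measurableSet_Ici,
    Measure.map_apply (measurable_const_mul σ) ((measurableSet_Ici).preimage (measurable_add_const m))]
  congr 1
  ext t
  simp only [Set.mem_preimage, Set.mem_Ici]
  rw [div_le_iff₀ hσ] -- (c - m)/σ ≤ t ↔ c - m ≤ t * σ
  constructor
  · intro h; linarith [h]
  · intro h; linarith [h]

lemma gaussianReal_Ici_toReal (m c σ : ℝ) (hσ : 0 < σ) :
    (gaussianReal m ⟨σ^2, sq_nonneg σ⟩ (Set.Ici c)).toReal = gaussQ ((c - m)/σ) := by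
  rw [gaussianReal_Ici_eq m c σ hσ]; rfl

lemma gaussQ_neg (a : ℝ) : gaussQ (-a) = 1 - gaussQ a := by
  have hmap : (gaussianReal (0:ℝ) 1).map (fun t => (-1) * t) = gaussianReal 0 1 := by
    rw [show (fun t : ℝ => (-1) * t) = ((-1 : ℝ) * ·) from rfl, gaussianReal_map_const_mul (-1)]
    norm_num
  have h1 : gaussianReal (0:ℝ) 1 (Set.Ici (-a)) = gaussianReal 0 1 (Set.Iic a) := by
    conv_lhs => rw [← hmap]
    rw [Measure.map_apply (measurable_const_mul (-1)) measurableSet_Ici]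
    congr 1
    ext t
    simp only [Set.mem_preimage, Set.mem_Ici, Set.mem_Iic]
    constructor <;> intro h <;> linarith
  have hsingleton : gaussianReal (0:ℝ) 1 {a} = 0 := by
    rw [gaussianReal_apply 0 one_ne_zero {a}]
    rw [show ({a} : Set ℝ) = {a} from rfl]
    exact setLIntegral_measure_zero _ _ (measure_singleton a)
  have hIci : gaussianReal (0:ℝ) 1 (Set.Ici a) = gaussianReal 0 1 (Set.Ioi a) := by
    refine le_antisymm ?_ (measure_mono Set.Ioi_subset_Ici_self)
    calc gaussianReal (0:ℝ) 1 (Set.Ici a) = gaussianReal (0:ℝ) 1 (Set.Ioi a ∪ {a}) := by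
          rw [Set.Ioi_union_left]
      _ ≤ gaussianReal (0:ℝ) 1 (Set.Ioi a) + gaussianReal (0:ℝ) 1 {a} := measure_union_le _ _
      _ = gaussianReal (0:ℝ) 1 (Set.Ioi a) := by rw [hsingleton, add_zero]
  have hcompl : gaussianReal (0:ℝ) 1 (Set.Iic a) = 1 - gaussianReal 0 1 (Set.Ioi a) := by
    have := measure_compl (μ := gaussianReal 0 1) (s := Set.Ioi a) measurableSet_Ioi
      (measure_ne_top _ _)
    rw [Set.compl_Ioi] at this
    rw [this, measure_univ]
  have hle : gaussianReal (0:ℝ) 1 (Set.Ioi a) ≤ 1 := (measure_mono (Set.subset_univ _)).trans_eq measure_univ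
  rw [gaussQ, gaussQ, h1, hcompl, hIci, ENNReal.toReal_sub_of_le hle ENNReal.one_ne_top]
  simp

lemma gaussQ_zero : gaussQ 0 = 1/2 := by
  have := gaussQ_neg 0
  rw [neg_zero] at this
  linarith

lemma tvDist_eq_of_split {E : Type*} [MeasurableSpace E] (μ ν : Measure E)
    [IsProbabilityMeasure μ] [IsProbabilityMeasure ν] (S : Set E) (hS : MeasurableSet S)
    (h1 : ∀ A : Set E, MeasurableSet A → A ⊆ S → ν A ≤ μ A)
    (h2 : ∀ A : Set E, MeasurableSet A → A ⊆ Sᶜ → μ A ≤ ν A) :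
    tvDist μ ν = (μ S).toReal - (ν S).toReal := by
  have hfin : ∀ (ρ : Measure E) [IsProbabilityMeasure ρ] (A : Set E), ρ A ≠ ⊤ :=
    fun ρ _ A => measure_ne_top ρ A
  -- the key bound
  have key : ∀ A : Set E, MeasurableSet A →
      |(μ A).toReal - (ν A).toReal| ≤ (μ S).toReal - (ν S).toReal := by
    intro A hA
    have hd1 : μ A + ν S ≤ μ S + ν A := by
      have e1 : μ (A ∩ S) + μ (A \ S) = μ A := measure_inter_add_diff A hS
      have e2 : ν (S ∩ A) + ν (S \ A) = ν S := measure_inter_add_diff S hA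
      have e3 : μ (S ∩ A) + μ (S \ A) = μ S := measure_inter_add_diff S hA
      have e4 : ν (A ∩ S) + ν (A \ S) = ν A := measure_inter_add_diff A hS
      have i1 : μ (A \ S) ≤ ν (A \ S) := h2 _ (hA.diff hS) (fun z hz => hz.2)
      have i2 : ν (S \ A) ≤ μ (S \ A) := h1 _ (hS.diff hA) Set.diff_subset
      have hAS : μ (A ∩ S) = μ (S ∩ A) := by rw [Set.inter_comm]
      have hAS' : ν (A ∩ S) = ν (S ∩ A) := by rw [Set.inter_comm]
      calc μ A + ν S = (μ (A ∩ S) + μ (A \ S)) + (ν (S ∩ A) + ν (S \ A)) := by rw [e1, e2]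
        _ ≤ (μ (A ∩ S) + ν (A \ S)) + (ν (S ∩ A) + μ (S \ A)) := by
            gcongr
        _ = (μ (S ∩ A) + μ (S \ A)) + (ν (A ∩ S) + ν (A \ S)) := by
            rw [hAS, hAS']; ring
        _ = μ S + ν A := by rw [e3, e4]
    have hd2 : ν A + ν S ≤ μ A + μ S := by
      have e1 : ν (A ∩ S) + ν (A \ S) = ν A := measure_inter_add_diff A hS
      have e2 : μ (A ∩ S) + μ (A \ S) = μ A := measure_inter_add_diff A hS
      have i1 : ν (A ∩ S) ≤ μ (A ∩ S) := h1 _ (hA.inter hS) Set.inter_subset_right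
      have hereBsub : (A ∪ S)ᶜ ⊆ Sᶜ := Set.compl_subset_compl.2 Set.subset_union_right
      have iB : ν (A ∪ S) ≤ μ (A ∪ S) := by
        have hc : μ ((A ∪ S)ᶜ) ≤ ν ((A ∪ S)ᶜ) := h2 _ (hA.union hS).compl hereBsub
        have hμ : μ (A ∪ S) = 1 - μ ((A ∪ S)ᶜ) := by
          rw [measure_compl (hA.union hS) (hfin μ _), measure_univ]
          rw [ENNReal.sub_sub_cancel ENNReal.one_ne_top (prob_le_one)]
        have hν : ν (A ∪ S) = 1 - ν ((A ∪ S)ᶜ) := by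
          rw [measure_compl (hA.union hS) (hfin ν _), measure_univ]
          rw [ENNReal.sub_sub_cancel ENNReal.one_ne_top (prob_le_one)]
        rw [hμ, hν]
        exact tsub_le_tsub_left hc 1
      have eu : ν (A \ S) + ν S = ν (A ∪ S) := by
        rw [← measure_union (disjoint_sdiff_left) hS, Set.diff_union_self]
      have eu2 : μ (A \ S) + μ S = μ (A ∪ S) := by
        rw [← measure_union (disjoint_sdiff_left) hS, Set.diff_union_self]
      calc ν A + ν S = ν (A ∩ S) + (ν (A \ S) + ν S) := by rw [← e1]; ring
        _ ≤ μ (A ∩ S) + ν (A ∪ S) := by rw [eu]; gcongr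
        _ ≤ μ (A ∩ S) + μ (A ∪ S) := by gcongr
        _ = μ (A ∩ S) + (μ (A \ S) + μ S) := by rw [eu2]
        _ = μ A + μ S := by rw [← e2]; ring
    have r1 : (μ A).toReal - (ν A).toReal ≤ (μ S).toReal - (ν S).toReal := by
      have := ENNReal.toReal_mono (by
          exact ENNReal.add_ne_top.2 ⟨hfin μ S, hfin ν A⟩) hd1
      rw [ENNReal.toReal_add (hfin μ A) (hfin ν S), ENNReal.toReal_add (hfin μ S) (hfin ν A)]
        at this
      linarith
    have r2 : (ν A).toReal - (μ A).toReal ≤ (μ S).toReal - (ν S).toReal := by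
      have := ENNReal.toReal_mono (by
          exact ENNReal.add_ne_top.2 ⟨hfin μ A, hfin μ S⟩) hd2
      rw [ENNReal.toReal_add (hfin ν A) (hfin ν S), ENNReal.toReal_add (hfin μ A) (hfin μ S)]
        at this
      linarith
    exact abs_le.2 ⟨by linarith, r1⟩
  have hν_le : ν S ≤ μ S := h1 S hS le_rfl
  have hnonneg : 0 ≤ (μ S).toReal - (ν S).toReal := by
    have := ENNReal.toReal_mono (hfin μ S) hν_le
    linarith
  haveI : Nonempty {A : Set E // MeasurableSet A} := ⟨⟨∅, MeasurableSet.empty⟩⟩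
  refine le_antisymm (ciSup_le fun A => key A.1 A.2) ?_
  have hb : BddAbove (Set.range fun A : {A : Set E // MeasurableSet A} =>
      |(μ A.1).toReal - (ν A.1).toReal|) := by
    refine ⟨(μ S).toReal - (ν S).toReal, ?_⟩
    rintro r ⟨A, rfl⟩
    exact key A.1 A.2
  have := le_ciSup hb (⟨S, hS⟩ : {A : Set E // MeasurableSet A})
  calc (μ S).toReal - (ν S).toReal = |(μ S).toReal - (ν S).toReal| := (abs_of_nonneg hnonneg).symm
    _ ≤ _ := this

/-- Total variation distance between two isotropic Gaussians with common
covariance `σ²I_d` and means `x, y`: `TV = 1 − 2Q(‖x − y‖/(2σ))`. -/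
theorem tv_between_gaussians (d : ℕ) (x y : EuclideanSpace ℝ (Fin d)) (σ : ℝ) (hσ : 0 < σ) :
    tvDist (gaussianE d x (σ ^ 2)) (gaussianE d y (σ ^ 2))
      = 1 - 2 * gaussQ (‖x - y‖ / (2 * σ)) := by
  by_cases hxy : x = y
  · subst hxy
    have h0 : ‖x - x‖ = 0 := by simp
    rw [h0, zero_div, gaussQ_zero]
    norm_num
    haveI : Nonempty {A : Set (EuclideanSpace ℝ (Fin d)) // MeasurableSet A} :=
      ⟨⟨∅, MeasurableSet.empty⟩⟩
    simp [tvDist]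
  · -- setup
    have hd : 0 < d := by
      rcases Nat.eq_zero_or_pos d with h | h
      · subst h
        exact absurd (PiLp.ext fun i => i.elim0 : x = y) hxy
      · exact h
    set r : ℝ := ‖x - y‖ with hr_def
    have hr : 0 < r := norm_sub_pos_iff.2 hxy
    set u : EuclideanSpace ℝ (Fin d) := r⁻¹ • (x - y) with hu_def
    have hu : ‖u‖ = 1 := by
      rw [hu_def, norm_smul, Real.norm_eq_abs, abs_inv, abs_of_pos hr, ← hr_def,
        inv_mul_cancel₀ hr.ne']
    set i₀ : Fin d := ⟨0, hd⟩ with hi₀_def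
    -- orthonormal basis with b i₀ = u
    have horth : Orthonormal ℝ (Set.restrict ({i₀} : Set (Fin d)) fun _ => u) := by
      refine ⟨fun j => hu, fun {i j} hij => absurd (Subtype.ext ?_) hij⟩
      have hi := i.2; have hj := j.2
      simp only [Set.mem_singleton_iff] at hi hj
      rw [hi, hj]
    obtain ⟨b, hb⟩ := horth.exists_orthonormalBasis_extension_of_card_eq
      (by simp [finrank_euclideanSpace])
    have hb0 : b i₀ = u := hb i₀ rfl
    have hrepr : ∀ z : EuclideanSpace ℝ (Fin d), b.repr z i₀ = (inner ℝ u z : ℝ) := by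
      intro z
      rw [b.repr_apply_apply z i₀, hb0]
    set c : ℝ := (‖x‖^2 - ‖y‖^2)/(2*r) with hc_def
    set S : Set (EuclideanSpace ℝ (Fin d)) := {z | b.repr z i₀ ∈ Set.Ici c} with hS_def
    have hrm : Measurable fun z : EuclideanSpace ℝ (Fin d) => b.repr z i₀ :=
      ((measurable_pi_apply i₀).comp ((MeasurableEquiv.toLp 2 (Fin d → ℝ)).symm).measurable).comp
        b.repr.continuous.measurable
    have hS : MeasurableSet S := hrm measurableSet_Ici
    -- probability measures
    have hprob : ∀ m : EuclideanSpace ℝ (Fin d), IsProbabilityMeasure (gaussianE d m (σ^2)) := by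
      intro m
      constructor
      have huniv : (Set.univ : Set (EuclideanSpace ℝ (Fin d)))
          = {z | b.repr z i₀ ∈ (Set.univ : Set ℝ)} := by ext z; simp
      rw [huniv, gaussianE_preimage d m σ hσ b i₀ MeasurableSet.univ]
      exact @measure_univ _ _ _ (instIsProbabilityMeasureGaussianReal _ _)
    haveI := hprob x
    haveI := hprob y
    -- density comparison
    have hcomp : ∀ (q q' : EuclideanSpace ℝ (Fin d)) (A : Set (EuclideanSpace ℝ (Fin d))),
        MeasurableSet A → (∀ z ∈ A, ‖z - q‖^2 ≤ ‖z - q'‖^2) →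
        gaussianE d q' (σ^2) A ≤ gaussianE d q (σ^2) A := by
      intro q q' A hA hz
      rw [gaussianE, gaussianE, withDensity_apply _ hA, withDensity_apply _ hA]
      refine setLIntegral_mono ?_ ?_
      · exact (Measurable.ennreal_ofReal (by fun_prop))
      · intro z hzA
        refine ENNReal.ofReal_le_ofReal ?_
        refine mul_le_mul_of_nonneg_left ?_ (by positivity)
        refine Real.exp_le_exp.2 ?_
        have := hz z hzA
        have hσ2 : (0:ℝ) < 2 * σ^2 := by positivity
        rw [div_le_div_iff_of_pos_right hσ2]
        linarith
    -- inner product inequality for membership in S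
    have hIeq : ∀ z : EuclideanSpace ℝ (Fin d),
        (inner ℝ u z : ℝ) = r⁻¹ * (inner ℝ (x - y) z : ℝ) := by
      intro z; rw [hu_def, real_inner_smul_left]
    have hkey : ∀ z ∈ S, ‖z - x‖^2 ≤ ‖z - y‖^2 := by
      intro z hzS
      have hc' : c ≤ (inner ℝ u z : ℝ) := by rw [← hrepr z]; exact hzS
      rw [hIeq z] at hc'
      have h2I : ‖x‖^2 - ‖y‖^2 ≤ 2 * (inner ℝ (x - y) z : ℝ) := by
        rw [hc_def] at hc'
        have := (div_le_iff₀ (by positivity : (0:ℝ) < 2*r)).1 hc'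
        have hcan : r⁻¹ * (inner ℝ (x - y) z : ℝ) * (2*r) = 2 * (inner ℝ (x - y) z : ℝ) := by
          field_simp
        linarith [hcan ▸ this]
      have e1 := norm_sub_sq_real z x
      have e2 := norm_sub_sq_real z y
      have e3 : (inner ℝ (x - y) z : ℝ) = (inner ℝ x z : ℝ) - (inner ℝ y z : ℝ) := inner_sub_left x y z
      have e4 : (inner ℝ z x : ℝ) = (inner ℝ x z : ℝ) := real_inner_comm x z
      have e5 : (inner ℝ z y : ℝ) = (inner ℝ y z : ℝ) := real_inner_comm y z
      nlinarith
    have hkey' : ∀ z ∈ Sᶜ, ‖z - y‖^2 ≤ ‖z - x‖^2 := by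
      intro z hzS
      have hc' : (inner ℝ u z : ℝ) ≤ c := by
        rw [← hrepr z]
        exact le_of_not_ge hzS
      rw [hIeq z] at hc'
      have h2I : 2 * (inner ℝ (x - y) z : ℝ) ≤ ‖x‖^2 - ‖y‖^2 := by
        rw [hc_def] at hc'
        have := (le_div_iff₀ (by positivity : (0:ℝ) < 2*r)).1 hc'
        have hcan : r⁻¹ * (inner ℝ (x - y) z : ℝ) * (2*r) = 2 * (inner ℝ (x - y) z : ℝ) := by
          field_simp
        linarith [hcan ▸ this]
      have e1 := norm_sub_sq_real z x
      have e2 := norm_sub_sq_real z y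
      have e3 : (inner ℝ (x - y) z : ℝ) = (inner ℝ x z : ℝ) - (inner ℝ y z : ℝ) := inner_sub_left x y z
      have e4 : (inner ℝ z x : ℝ) = (inner ℝ x z : ℝ) := real_inner_comm x z
      have e5 : (inner ℝ z y : ℝ) = (inner ℝ y z : ℝ) := real_inner_comm y z
      nlinarith
    -- apply the splitting lemma
    rw [tvDist_eq_of_split (gaussianE d x (σ^2)) (gaussianE d y (σ^2)) S hS
      (fun A hA hAS => hcomp x y A hA fun z hz => hkey z (hAS hz))
      (fun A hA hAS => hcomp y x A hA fun z hz => hkey' z (hAS hz))]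
    -- compute both measures
    have hμS : gaussianE d x (σ^2) S = gaussianReal (b.repr x i₀) ⟨σ^2, sq_nonneg σ⟩ (Set.Ici c) :=
      gaussianE_preimage d x σ hσ b i₀ measurableSet_Ici
    have hνS : gaussianE d y (σ^2) S = gaussianReal (b.repr y i₀) ⟨σ^2, sq_nonneg σ⟩ (Set.Ici c) :=
      gaussianE_preimage d y σ hσ b i₀ measurableSet_Ici
    -- the inner products
    have hr2 : r^2 = ‖x‖^2 - 2*(inner ℝ x y : ℝ) + ‖y‖^2 := by
      rw [hr_def]; exact norm_sub_sq_real x y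
    have hux : (inner ℝ u x : ℝ) = r⁻¹ * (‖x‖^2 - (inner ℝ x y : ℝ)) := by
      rw [hIeq x, inner_sub_left, real_inner_self_eq_norm_sq, real_inner_comm y x]
    have huy : (inner ℝ u y : ℝ) = r⁻¹ * ((inner ℝ x y : ℝ) - ‖y‖^2) := by
      rw [hIeq y, inner_sub_left, real_inner_self_eq_norm_sq]
    set I : ℝ := (inner ℝ x y : ℝ) with hI_def
    have hcx : (c - (inner ℝ u x : ℝ))/σ = -(r/(2*σ)) := by
      rw [hux, hc_def]
      field_simp
      linear_combination hr2
    have hcy : (c - (inner ℝ u y : ℝ))/σ = r/(2*σ) := by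
      rw [huy, hc_def]
      field_simp
      linear_combination -hr2
    rw [hμS, hνS, gaussianReal_Ici_toReal _ _ _ hσ, gaussianReal_Ici_toReal _ _ _ hσ,
      hrepr x, hrepr y, hcx, hcy, gaussQ_neg]
    ring
end
end

section
/- Let μ ∈ ℝ and σ > 0. Then the total variation distance between the one-dimensional Gaussian measures N(μ, σ²) and N(0, σ²) satisfies TV(N(μ, σ²), N(0, σ²)) = Φ(|μ|/(2σ)) − Φ(−|μ|/(2σ)) = 1 − 2Q(|μ|/(2σ)). -/
open MeasureTheory

noncomputable section

section TVAux

open ProbabilityTheory Set Real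

local notation "g01" => gaussianReal 0 1

lemma g01_singleton (t : ℝ) : g01 {t} = 0 :=
  gaussianReal_absolutelyContinuous 0 one_ne_zero (measure_singleton t)

lemma g01_Ici_eq_Ioi (t : ℝ) : g01 (Ici t) = g01 (Ioi t) := by
  refine le_antisymm ?_ (measure_mono Ioi_subset_Ici_self)
  calc g01 (Ici t) = g01 ({t} ∪ Ioi t) := by rw [singleton_union, Ioi_insert]
  _ ≤ g01 {t} + g01 (Ioi t) := measure_union_le _ _
  _ = g01 (Ioi t) := by rw [g01_singleton, zero_add]

lemma g01_symm (t : ℝ) : g01 (Iic (-t)) = g01 (Ici t) := by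
  have h := gaussianReal_map_const_mul (μ := 0) (v := 1) (-1)
  have h1 : (⟨(-1:ℝ)^2, sq_nonneg _⟩ : NNReal) * 1 = 1 := by
    ext; norm_num
  rw [mul_zero] at h
  replace h : Measure.map (fun x : ℝ => -1 * x) g01 = g01 := by
    rw [h]; exact congrArg (gaussianReal 0) h1
  conv_lhs => rw [← h]
  rw [Measure.map_apply (by fun_prop) measurableSet_Iic]
  congr 1
  ext x
  simp only [Set.mem_preimage, Set.mem_Iic, Set.mem_Ici]
  constructor <;> intro <;> linarith

lemma stdCDF_eq (t : ℝ) : stdCDF t = 1 - gaussQ t := by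
  have h : g01 (Iic t) + g01 (Ioi t) = 1 := by
    rw [← measure_union (Iic_disjoint_Ioi le_rfl) measurableSet_Ioi, Iic_union_Ioi,
      measure_univ]
  rw [stdCDF, gaussQ, g01_Ici_eq_Ioi]
  have h1 : g01 (Iic t) ≠ ⊤ := measure_ne_top _ _
  have h2 : g01 (Ioi t) ≠ ⊤ := measure_ne_top _ _
  have := congrArg ENNReal.toReal h
  rw [ENNReal.toReal_add h1 h2] at this
  simp at this ⊢
  linarith

lemma stdCDF_neg (t : ℝ) : stdCDF (-t) = gaussQ t := by
  rw [stdCDF, gaussQ, g01_symm]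

lemma gauss_eq_map {σ : ℝ} (m : ℝ) (hσ : 0 < σ) :
    gaussianReal m (σ ^ 2).toNNReal
      = (gaussianReal 0 1).map (fun x => σ * x + m) := by
  have h1 : (gaussianReal 0 1).map (σ * ·) = gaussianReal 0 (σ ^ 2).toNNReal := by
    rw [gaussianReal_map_const_mul]
    congr 1
    · ring
    · ext
      simp [Real.coe_toNNReal _ (sq_nonneg σ)]
  have h2 : ((gaussianReal 0 (σ^2).toNNReal).map (· + m)) = gaussianReal m (σ^2).toNNReal := by
    rw [gaussianReal_map_add_const, zero_add]
  rw [← h2, ← h1, Measure.map_map (by fun_prop) (by fun_prop)]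
  rfl

lemma gauss_Ici {σ : ℝ} (m t : ℝ) (hσ : 0 < σ) :
    gaussianReal m (σ ^ 2).toNNReal (Ici t) = gaussianReal 0 1 (Ici ((t - m) / σ)) := by
  rw [gauss_eq_map m hσ, Measure.map_apply (by fun_prop) measurableSet_Ici]
  congr 1
  ext x
  simp only [mem_preimage, mem_Ici]
  rw [div_le_iff₀ hσ]
  constructor <;> intro <;> nlinarith

lemma gauss_Iic {σ : ℝ} (m t : ℝ) (hσ : 0 < σ) :
    gaussianReal m (σ ^ 2).toNNReal (Iic t) = gaussianReal 0 1 (Iic ((t - m) / σ)) := by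
  rw [gauss_eq_map m hσ, Measure.map_apply (by fun_prop) measurableSet_Iic]
  congr 1
  ext x
  simp only [mem_preimage, mem_Iic]
  rw [le_div_iff₀ hσ]
  constructor <;> intro <;> nlinarith

lemma gauss_toReal (m : ℝ) {v : NNReal} (hv : v ≠ 0) (s : Set ℝ) :
    (gaussianReal m v s).toReal = ∫ x in s, gaussianPDFReal m v x := by
  rw [gaussianReal_apply_eq_integral m hv s, ENNReal.toReal_ofReal]
  exact integral_nonneg fun x => gaussianPDFReal_nonneg m v x

lemma tv_key (m₁ m₂ : ℝ) {v : NNReal} (hv : v ≠ 0) (T A : Set ℝ)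
    (hT : MeasurableSet T) (hA : MeasurableSet A)
    (h1 : ∀ x ∈ T, gaussianPDFReal m₂ v x ≤ gaussianPDFReal m₁ v x)
    (h2 : ∀ x ∈ Tᶜ, gaussianPDFReal m₁ v x ≤ gaussianPDFReal m₂ v x) :
    (gaussianReal m₁ v A).toReal - (gaussianReal m₂ v A).toReal
      ≤ (gaussianReal m₁ v T).toReal - (gaussianReal m₂ v T).toReal := by
  set f := gaussianPDFReal m₁ v
  set g := gaussianPDFReal m₂ v
  have hfi : ∀ s : Set ℝ, IntegrableOn f s := fun s =>
    (integrable_gaussianPDFReal m₁ v).integrableOn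
  have hgi : ∀ s : Set ℝ, IntegrableOn g s := fun s =>
    (integrable_gaussianPDFReal m₂ v).integrableOn
  have splitA : ∀ h : ℝ → ℝ, IntegrableOn h (A ∩ T) → IntegrableOn h (A \ T) →
      ∫ x in A, h x = (∫ x in A ∩ T, h x) + ∫ x in A \ T, h x := by
    intro h hi1 hi2
    rw [← setIntegral_union (by rw [Set.disjoint_left]; rintro x ⟨-, h⟩ ⟨-, h'⟩; exact h' h)
        (hA.diff hT) hi1 hi2, Set.inter_union_diff]
  have splitT : ∀ h : ℝ → ℝ, IntegrableOn h (A ∩ T) → IntegrableOn h (T \ A) →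
      ∫ x in T, h x = (∫ x in A ∩ T, h x) + ∫ x in T \ A, h x := by
    intro h hi1 hi2
    rw [← setIntegral_union (by rw [Set.disjoint_left]; rintro x ⟨h, -⟩ ⟨-, h'⟩; exact h' h)
        (hT.diff hA) hi1 hi2, Set.inter_comm, Set.inter_union_diff]
  have e1 : ∫ x in A \ T, f x ≤ ∫ x in A \ T, g x :=
    setIntegral_mono_on (hfi _) (hgi _) (hA.diff hT) fun x hx => h2 x hx.2
  have e2 : ∫ x in T \ A, g x ≤ ∫ x in T \ A, f x :=
    setIntegral_mono_on (hgi _) (hfi _) (hT.diff hA) fun x hx => h1 x hx.1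
  rw [gauss_toReal m₁ hv, gauss_toReal m₂ hv, gauss_toReal m₁ hv, gauss_toReal m₂ hv,
    splitA f (hfi _) (hfi _), splitA g (hgi _) (hgi _),
    splitT f (hfi _) (hfi _), splitT g (hgi _) (hgi _)]
  linarith

lemma pdf_mono (m₁ m₂ x : ℝ) {v : NNReal} (hv : 0 < (v:ℝ))
    (h : (x - m₁)^2 ≤ (x - m₂)^2) :
    gaussianPDFReal m₂ v x ≤ gaussianPDFReal m₁ v x := by
  unfold gaussianPDFReal
  have h2v : (0:ℝ) < 2 * v := by linarith
  gcongr

end TVAux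

/-- Total variation distance between one-dimensional Gaussians
`N(μ, σ²)` and `N(0, σ²)`: it equals `Φ(|μ|/(2σ)) − Φ(−|μ|/(2σ)) = 1 − 2Q(|μ|/(2σ))`. -/
theorem tv_gaussianReal (μ σ : ℝ) (hσ : 0 < σ) :
    tvDist (ProbabilityTheory.gaussianReal μ (σ ^ 2).toNNReal)
        (ProbabilityTheory.gaussianReal 0 (σ ^ 2).toNNReal)
      = stdCDF (|μ| / (2 * σ)) - stdCDF (-(|μ| / (2 * σ))) ∧
    tvDist (ProbabilityTheory.gaussianReal μ (σ ^ 2).toNNReal)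
        (ProbabilityTheory.gaussianReal 0 (σ ^ 2).toNNReal)
      = 1 - 2 * gaussQ (|μ| / (2 * σ)) := by
  open ProbabilityTheory Set in
  set r := |μ| / (2 * σ) with hr
  have hident : stdCDF r - stdCDF (-r) = 1 - 2 * gaussQ r := by
    rw [stdCDF_eq, stdCDF_neg]; ring
  have hvpos : (0:ℝ) < ((σ ^ 2).toNNReal : ℝ) := by
    rw [Real.coe_toNNReal _ (sq_nonneg σ)]; positivity
  have hv : (σ ^ 2).toNNReal ≠ 0 := by
    intro h; rw [h] at hvpos; simp at hvpos
  set v := (σ ^ 2).toNNReal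
  rcases eq_or_ne μ 0 with hμ | hμ
  · -- μ = 0 : both measures are equal and both RHS are 0
    subst hμ
    have h0 : tvDist (gaussianReal 0 v) (gaussianReal 0 v) = 0 := by
      have : ∀ A : {A : Set ℝ // MeasurableSet A},
          |((gaussianReal 0 v) A.1).toReal - ((gaussianReal 0 v) A.1).toReal| = 0 := by
        intro A; simp
      unfold tvDist
      simp only [this]
      exact ciSup_const (ι := {A : Set ℝ // MeasurableSet A})
        (hι := ⟨⟨∅, MeasurableSet.empty⟩⟩)
    have hr0 : r = 0 := by simp [hr]
    have hq : gaussQ 0 = 1/2 := by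
      have h1 := stdCDF_eq 0
      have h2 := stdCDF_neg 0
      rw [neg_zero] at h2
      linarith
    rw [hr0] at hident ⊢
    rw [h0]
    refine ⟨?_, ?_⟩
    · rw [neg_zero, sub_self]
    · rw [hq]; ring
  · -- μ ≠ 0
    set S : Set ℝ := {x | μ^2 / 2 ≤ μ * x} with hSdef
    have hS : MeasurableSet S :=
      measurableSet_le measurable_const (measurable_id.const_mul μ)
    have h1 : ∀ x ∈ S, gaussianPDFReal 0 v x ≤ gaussianPDFReal μ v x := by
      intro x hx
      exact pdf_mono μ 0 x hvpos (by simp only [hSdef, mem_setOf_eq] at hx; nlinarith)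
    have h2 : ∀ x ∈ Sᶜ, gaussianPDFReal μ v x ≤ gaussianPDFReal 0 v x := by
      intro x hx
      simp only [hSdef, mem_compl_iff, mem_setOf_eq, not_le] at hx
      exact pdf_mono 0 μ x hvpos (by nlinarith)
    set p : Set ℝ → ℝ := fun A => ((gaussianReal μ v) A).toReal with hp
    set q : Set ℝ → ℝ := fun A => ((gaussianReal 0 v) A).toReal with hq
    set B : ℝ := p S - q S with hB
    have hcompl : ∀ m : ℝ, ((gaussianReal m v) Sᶜ).toReal = 1 - ((gaussianReal m v) S).toReal := by
      intro m
      rw [measure_compl hS (measure_ne_top _ _), measure_univ,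
        ENNReal.toReal_sub_of_le prob_le_one (by simp)]
      simp
    have hub : ∀ A : Set ℝ, MeasurableSet A → |p A - q A| ≤ B := by
      intro A hA
      rw [abs_sub_le_iff]
      constructor
      · exact tv_key μ 0 hv S A hS hA h1 h2
      · have := tv_key 0 μ hv Sᶜ A hS.compl hA h2 (by rw [compl_compl]; exact h1)
        have hc1 := hcompl μ
        have hc2 := hcompl 0
        simp only [hp, hq, hB] at *
        linarith
    have hqp : q S ≤ p S := by
      simp only [hp, hq]
      rw [gauss_toReal μ hv, gauss_toReal 0 hv]
      exact setIntegral_mono_on ((integrable_gaussianPDFReal 0 v).integrableOn)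
        ((integrable_gaussianPDFReal μ v).integrableOn) hS h1
    have htv : tvDist (gaussianReal μ v) (gaussianReal 0 v) = B := by
      apply le_antisymm
      · exact ciSup_le fun A => hub A.1 A.2
      · have hbdd : BddAbove (Set.range fun A : {A : Set ℝ // MeasurableSet A} =>
            |((gaussianReal μ v) A.1).toReal - ((gaussianReal 0 v) A.1).toReal|) := by
          refine ⟨B, ?_⟩
          rintro x ⟨A, rfl⟩
          exact hub A.1 A.2
        have := le_ciSup hbdd (⟨S, hS⟩ : {A : Set ℝ // MeasurableSet A})
        rw [abs_of_nonneg (by simp only [hp, hq] at hqp; linarith)] at this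
        exact this
    -- compute B
    have hBval : B = 1 - 2 * gaussQ r := by
      rcases hμ.lt_or_gt with hneg | hpos
      · -- μ < 0 : S = Iic (μ/2)
        have hSeq : S = Iic (μ / 2) := by
          ext x
          simp only [hSdef, mem_setOf_eq, mem_Iic]
          constructor <;> intro <;> nlinarith
        have habs : |μ| = -μ := abs_of_neg hneg
        have ha1 : (μ / 2 - μ) / σ = r := by
          rw [hr, habs]; field_simp; try ring
        have ha2 : (μ / 2 - 0) / σ = -r := by
          rw [hr, habs]; field_simp; try ring
        have hpS : p S = stdCDF r := by
          simp only [hp, hSeq]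
          rw [gauss_Iic μ (μ/2) hσ, ha1, stdCDF]
        have hqS : q S = gaussQ r := by
          simp only [hq, hSeq]
          rw [gauss_Iic 0 (μ/2) hσ, ha2, ← stdCDF, stdCDF_neg]
        rw [hB, hpS, hqS, stdCDF_eq]; ring
      · -- 0 < μ : S = Ici (μ/2)
        have hSeq : S = Ici (μ / 2) := by
          ext x
          simp only [hSdef, mem_setOf_eq, mem_Ici]
          constructor <;> intro <;> nlinarith
        have habs : |μ| = μ := abs_of_pos hpos
        have ha1 : (μ / 2 - μ) / σ = -r := by
          rw [hr, habs]; field_simp; try ring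
        have ha2 : (μ / 2 - 0) / σ = r := by
          rw [hr, habs]; field_simp; try ring
        have hpS : p S = stdCDF r := by
          simp only [hp, hSeq]
          rw [gauss_Ici μ (μ/2) hσ, ha1]
          have h3 := g01_symm (-r)
          rw [neg_neg] at h3
          rw [← h3, stdCDF]
        have hqS : q S = gaussQ r := by
          simp only [hq, hSeq]
          rw [gauss_Ici 0 (μ/2) hσ, ha2, gaussQ]
        rw [hB, hpS, hqS, stdCDF_eq]; ring
    rw [htv, hBval]
    exact ⟨hident.symm ▸ rfl, rfl⟩
end
end
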